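/- arXiv:2202.12536 — 10 statements merged into one kernel-verified Lean document; each statement's English description precedes it below -/
import Mathlib

section
/- For every integer t ≥ 1, the complement of the perfect matching tK₂ (the graph on 2t vertices whose non-edges form a perfect matching) is not (t−1)-thin. -/
/-- The complement of the perfect matching `tK₂`: vertices are `Fin t × Fin 2`,
with an edge between `(i,a)` and `(j,b)` iff `i ≠ j`. -/
def matchingComplement (t : ℕ) : SimpleGraph (Fin t × Fin 2) :=
  SimpleGraph.fromRel (fun p q => p.1 ≠ q.1)

/-- A graph is `k`-thin if there are a partition of the vertices into `k` parts
(given by `c`) and a linear order on the vertices (given by an injection `f` into `ℕ`)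
such that whenever `u < v < w` and `u, v` lie in the same part, `uw ∈ E` implies `vw ∈ E`. -/
def IsKThin {V : Type*} (G : SimpleGraph V) (k : ℕ) : Prop :=
  ∃ (c : V → Fin k) (f : V → ℕ), Function.Injective f ∧
    ∀ u v w : V, f u < f v → f v < f w → c u = c v → G.Adj u w → G.Adj v w

theorem matchingComplement_not_thin (t : ℕ) (ht : 1 ≤ t) :
    ¬ IsKThin (matchingComplement t) (t - 1) := by
  rintro ⟨c, f, hf, h⟩
  have hne : ∀ i : Fin t, f (i, 0) ≠ f (i, 1) := by
    intro i hEq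
    have := hf hEq
    simp at this
  set g : Fin t → Fin t × Fin 2 := fun i =>
    if f (i, 0) < f (i, 1) then (i, 0) else (i, 1) with hg
  set p : Fin t → Fin t × Fin 2 := fun i =>
    if f (i, 0) < f (i, 1) then (i, 1) else (i, 0) with hp
  have hgfst : ∀ i, (g i).1 = i := by
    intro i; simp only [hg]; split <;> rfl
  have hpfst : ∀ i, (p i).1 = i := by
    intro i; simp only [hp]; split <;> rfl
  have hlt : ∀ i, f (g i) < f (p i) := by
    intro i
    simp only [hg, hp]
    rcases lt_or_gt_of_ne (hne i) with h1 | h1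
    · simp [h1]
    · simp [not_lt_of_gt h1]
      omega
  have hcard : Fintype.card (Fin (t - 1)) < Fintype.card (Fin t) := by
    simp; omega
  obtain ⟨i, j, hij, hcij⟩ := Fintype.exists_ne_map_eq_of_card_lt (c ∘ g) hcard
  have key : ∀ i j : Fin t, i ≠ j → c (g i) = c (g j) → f (g i) < f (g j) → False := by
    intro i j hij hc hlt'
    have hadj : (matchingComplement t).Adj (g i) (p j) := by
      rw [matchingComplement, SimpleGraph.fromRel_adj]
      refine ⟨?_, Or.inl ?_⟩
      · intro hEq
        apply hij
        have := congrArg Prod.fst hEq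
        rwa [hgfst, hpfst] at this
      · rw [hgfst i, hpfst j]; exact hij
    have hbad := h (g i) (g j) (p j) hlt' (hlt j) hc hadj
    rw [matchingComplement, SimpleGraph.fromRel_adj] at hbad
    have heq : (g j).1 = (p j).1 := by rw [hgfst, hpfst]
    exact hbad.2.elim (fun hh => hh heq) (fun hh => hh heq.symm)
  have hfne : f (g i) ≠ f (g j) := by
    intro hEq
    apply hij
    have := hf hEq
    rw [← hgfst i, ← hgfst j, this]
  rcases lt_or_gt_of_ne hfne with h1 | h1
  · exact key i j hij hcij h1
  · exact key j i hij.symm hcij.symm h1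
end

section
/- Let m, n ≥ 1 and let G be the (m × n)-grid graph. Partition V(G) = {1,…,m} × {1,…,n} into three parts V₁, V₂, V₃ where V_i = {(a,b) : a ≡ i (mod 3)}. For each 1 ≤ i ≤ j ≤ 3, define the relation (a,b) ≤_{ij} (c,d) on V_i ∪ V_j by: a < c−1, or (|a−c| ≤ 1 and b < d), or (a ∈ {c−1, c} and b = d). Then each ≤_{ij} is a linear order on V_i ∪ V_j, and these orders witness that G is an inversion-free proper 3-mixed-thin graph: for every 1 ≤ i ≤ j ≤ 3 and every triple u ≤_{ij} v ≤_{ij} w (all distinct) with two of them in the same part among {V_i, V_j} as required below, (b) if u,v lie in one part, w in the other (or the same, when i = j), and uw ∈ E(G), then vw ∈ E(G); and (c) if v,w lie in one part, u in the other, and uw ∈ E(G), then uv ∈ E(G). -/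
/-- The `(m × n)`-grid graph on `Fin m × Fin n` (coordinates `1,…,m` shifted to `0,…,m-1`):
edges between vertices at `L¹`-distance 1. -/
def gridGraph (m n : ℕ) : SimpleGraph (Fin m × Fin n) :=
  SimpleGraph.fromRel (fun p q =>
    (((p.1 : ℕ) + 1 = (q.1 : ℕ) ∨ (q.1 : ℕ) + 1 = (p.1 : ℕ)) ∧ p.2 = q.2) ∨
    (((p.2 : ℕ) + 1 = (q.2 : ℕ) ∨ (q.2 : ℕ) + 1 = (p.2 : ℕ)) ∧ p.1 = q.1))

/-- Part of a vertex: the residue mod 3 of its first (1-based) coordinate. -/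
def gridPart {m n : ℕ} (v : Fin m × Fin n) : ℕ := ((v.1 : ℕ) + 1) % 3

/-- The order `(a,b) ≤ (c,d)` iff `a < c−1`, or (`|a−c| ≤ 1` and `b < d`),
or (`a ∈ {c−1,c}` and `b = d`); stated on the 0-based coordinates (shift-invariant). -/
def gridLe {m n : ℕ} (u v : Fin m × Fin n) : Prop :=
  (u.1 : ℕ) + 1 < (v.1 : ℕ) ∨
  (((u.1 : ℕ) ≤ (v.1 : ℕ) + 1 ∧ (v.1 : ℕ) ≤ (u.1 : ℕ) + 1) ∧ (u.2 : ℕ) < (v.2 : ℕ)) ∨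
  (((u.1 : ℕ) + 1 = (v.1 : ℕ) ∨ (u.1 : ℕ) = (v.1 : ℕ)) ∧ (u.2 : ℕ) = (v.2 : ℕ))

lemma grid_adj_iff {m n : ℕ} (u v : Fin m × Fin n) :
    (gridGraph m n).Adj u v ↔
    ((((u.1:ℕ) + 1 = v.1 ∨ (v.1:ℕ) + 1 = u.1) ∧ (u.2:ℕ) = v.2) ∨
     (((u.2:ℕ) + 1 = v.2 ∨ (v.2:ℕ) + 1 = u.2) ∧ (u.1:ℕ) = v.1)) := by
  simp only [gridGraph, SimpleGraph.fromRel_adj, ne_eq, Prod.ext_iff, Fin.ext_iff, not_and]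
  constructor
  · rintro ⟨h, h1 | h1⟩ <;> omega
  · intro h
    refine ⟨fun h1 h2 => by omega, Or.inl ?_⟩
    omega

/-- The partition `V₁, V₂, V₃` by first coordinate mod 3 and the orders `≤_{ij} = gridLe`
witness that the `(m × n)`-grid is inversion-free proper 3-mixed-thin (with all
`E_{i,j} = E`): each `≤_{ij}` is a linear order on `V_i ∪ V_j`, and conditions (b), (c)
of Definition 1 hold. -/
theorem gridGraph_invFree_proper_three_mixed_thin (m n : ℕ) (hm : 1 ≤ m) (hn : 1 ≤ n)
    (i j : ℕ) (hi : 1 ≤ i) (hij : i ≤ j) (hj : j ≤ 3) :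
    -- `≤_{ij}` is a linear order on `V_i ∪ V_j`
    ((∀ u : Fin m × Fin n, (gridPart u = i % 3 ∨ gridPart u = j % 3) → gridLe u u) ∧
     (∀ u v : Fin m × Fin n, (gridPart u = i % 3 ∨ gridPart u = j % 3) →
        (gridPart v = i % 3 ∨ gridPart v = j % 3) → gridLe u v → gridLe v u → u = v) ∧
     (∀ u v w : Fin m × Fin n, (gridPart u = i % 3 ∨ gridPart u = j % 3) →
        (gridPart v = i % 3 ∨ gridPart v = j % 3) →
        (gridPart w = i % 3 ∨ gridPart w = j % 3) →
        gridLe u v → gridLe v w → gridLe u w) ∧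
     (∀ u v : Fin m × Fin n, (gridPart u = i % 3 ∨ gridPart u = j % 3) →
        (gridPart v = i % 3 ∨ gridPart v = j % 3) → gridLe u v ∨ gridLe v u)) ∧
    -- condition (b)
    (∀ u v w : Fin m × Fin n,
      ((gridPart u = i % 3 ∧ gridPart v = i % 3 ∧ gridPart w = j % 3) ∨
       (gridPart u = j % 3 ∧ gridPart v = j % 3 ∧ gridPart w = i % 3)) →
      gridLe u v → u ≠ v → gridLe v w → v ≠ w →
      (gridGraph m n).Adj u w → (gridGraph m n).Adj v w) ∧
    -- condition (c)
    (∀ u v w : Fin m × Fin n,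
      ((gridPart v = i % 3 ∧ gridPart w = i % 3 ∧ gridPart u = j % 3) ∨
       (gridPart v = j % 3 ∧ gridPart w = j % 3 ∧ gridPart u = i % 3)) →
      gridLe u v → u ≠ v → gridLe v w → v ≠ w →
      (gridGraph m n).Adj u w → (gridGraph m n).Adj u v) := by
  constructor
  · refine ⟨?_, ?_, ?_, ?_⟩
    · exact fun u _ => Or.inr (Or.inr ⟨Or.inr rfl, rfl⟩)
    · rintro ⟨⟨a, _⟩, ⟨b, _⟩⟩ ⟨⟨c, _⟩, ⟨d, _⟩⟩ _ _ h1 h2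
      simp only [gridLe, Fin.val_mk] at h1 h2
      simp only [Prod.mk.injEq, Fin.mk.injEq]
      omega
    · rintro ⟨⟨a, _⟩, ⟨b, _⟩⟩ ⟨⟨c, _⟩, ⟨d, _⟩⟩ ⟨⟨e, _⟩, ⟨f, _⟩⟩ hu hv hw h1 h2
      simp only [gridLe, gridPart, Fin.val_mk] at hu hv hw h1 h2 ⊢
      omega
    · rintro ⟨⟨a, _⟩, ⟨b, _⟩⟩ ⟨⟨c, _⟩, ⟨d, _⟩⟩ _ _
      simp only [gridLe, Fin.val_mk]
      omega
  constructor
  · rintro ⟨⟨a, _⟩, ⟨b, _⟩⟩ ⟨⟨c, _⟩, ⟨d, _⟩⟩ ⟨⟨e, _⟩, ⟨f, _⟩⟩ hp h1 hne1 h2 hne2 hadj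
    rw [grid_adj_iff] at hadj ⊢
    simp only [gridLe, gridPart, Fin.val_mk, ne_eq, Prod.mk.injEq, Fin.mk.injEq,
      not_and] at hp h1 hne1 h2 hne2 hadj ⊢
    omega
  · rintro ⟨⟨a, _⟩, ⟨b, _⟩⟩ ⟨⟨c, _⟩, ⟨d, _⟩⟩ ⟨⟨e, _⟩, ⟨f, _⟩⟩ hp h1 hne1 h2 hne2 hadj
    rw [grid_adj_iff] at hadj ⊢
    simp only [gridLe, gridPart, Fin.val_mk, ne_eq, Prod.mk.injEq, Fin.mk.injEq,
      not_and] at hp h1 hne1 h2 hne2 hadj ⊢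
    omega
end

section
/- For every m, r with m > 1, the complete rooted m-ary tree of height h has thinness at least c·h for some constant c > 0 depending only on m; in particular, the thinness of the complete m-ary tree is unbounded as h → ∞. -/
/-- The complete `m`-ary rooted tree of height `h`: vertices are the sequences over
`Fin m` of length at most `h` (the root is the empty sequence), with edges between each
vertex and its children (obtained by prepending one letter). -/
def completeMaryTree (m h : ℕ) : SimpleGraph {l : List (Fin m) // l.length ≤ h} :=
  SimpleGraph.fromRel (fun x y => ∃ a : Fin m, y.val = a :: x.val)

namespace ThinAux

abbrev Vtx (m h : ℕ) := {l : List (Fin m) // l.length ≤ h}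

lemma suffix_of_suffix_le {α : Type*} {l₁ l₂ l : List α} (h₁ : l₁ <:+ l) (h₂ : l₂ <:+ l)
    (hle : l₁.length ≤ l₂.length) : l₁ <:+ l₂ := by
  rw [List.suffix_iff_eq_drop] at h₁ h₂
  rw [h₁, h₂]
  exact List.drop_suffix_drop_left l (by omega)

lemma suffix_eq_of_length {α : Type*} {l₁ l₂ l : List α} (h₁ : l₁ <:+ l) (h₂ : l₂ <:+ l)
    (he : l₁.length = l₂.length) : l₁ = l₂ :=
  (suffix_of_suffix_le h₁ h₂ he.le).eq_of_length he

lemma adj_iff {m h : ℕ} (x y : Vtx m h) :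
    (completeMaryTree m h).Adj x y ↔
      x ≠ y ∧ ((∃ a, y.val = a :: x.val) ∨ (∃ a, x.val = a :: y.val)) := by
  simp [completeMaryTree, SimpleGraph.fromRel_adj]

lemma adj_cons {m h : ℕ} (a : Fin m) (l : List (Fin m)) (h1 : l.length ≤ h)
    (h2 : (a::l).length ≤ h) : (completeMaryTree m h).Adj ⟨l, h1⟩ ⟨a::l, h2⟩ := by
  rw [adj_iff]
  exact ⟨fun e => List.cons_ne_self a l (congrArg Subtype.val e).symm, Or.inl ⟨a, rfl⟩⟩

/-- The key structure: `n` vertices in the subtree rooted at `r`, all placed at time `θ`,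
each with a private unplaced neighbour witness in the same subtree. -/
def Str (m h : ℕ) (f : Vtx m h → ℕ) (n : ℕ) (r : List (Fin m)) (θ : ℕ) : Prop :=
  ∃ u w : Fin n → Vtx m h,
    Function.Injective u ∧
    (∀ i, r <:+ (u i).val) ∧ (∀ i, r <:+ (w i).val) ∧
    (∀ i, f (u i) ≤ θ) ∧ (∀ i, θ < f (w i)) ∧
    (∀ i, (completeMaryTree m h).Adj (u i) (w i)) ∧
    (∀ i j, i ≠ j → ¬ (completeMaryTree m h).Adj (u j) (w i))

/-- Non-adjacency across different depth-3 subtrees: if `x` lies on the suffix-path of a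
vertex of the subtree tagged `(a,b)` and `z2` is in the subtree tagged `(a',b')`,
then `x` and `z2` are not adjacent. -/
lemma na {m h : ℕ} {r p : List (Fin m)} {c a b c' a' b' : Fin m} {x z2 : Vtx m h}
    (hne : a ≠ a' ∨ b ≠ b') (hzp : x.val <:+ p) (hdp : (c::a::b::r) <:+ p)
    (hz2 : (c'::a'::b'::r) <:+ z2.val) : ¬ (completeMaryTree m h).Adj x z2 := by
  rw [adj_iff]
  rintro ⟨hxne, ⟨cc, hcc⟩ | ⟨cc, hcc⟩⟩
  · -- z2.val = cc :: x.val
    have hsub : x.val <:+ z2.val := by rw [hcc]; exact List.suffix_cons cc _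
    have hlen2 : (c'::a'::b'::r).length ≤ z2.val.length := hz2.length_le
    by_cases hbig : r.length + 3 ≤ x.val.length
    · have h1 : (c::a::b::r) <:+ x.val := suffix_of_suffix_le hdp hzp (by simp; omega)
      have h2 : (c'::a'::b'::r) <:+ x.val := suffix_of_suffix_le hz2 hsub (by simp; omega)
      have := suffix_eq_of_length h1 h2 (by simp)
      simp only [List.cons.injEq] at this
      rcases hne with hne | hne
      · exact hne this.2.1
      · exact hne this.2.2.1
    · have hxlen : x.val.length + 1 = z2.val.length := by rw [hcc]; simp
      have hxl : x.val.length = r.length + 2 := by simp at hlen2; omega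
      have e1 : x.val = a::b::r :=
        suffix_eq_of_length hzp ((List.suffix_cons c _).trans hdp) (by simp [hxl])
      have e2 : x.val = a'::b'::r :=
        suffix_eq_of_length hsub ((List.suffix_cons c' _).trans hz2) (by simp [hxl])
      rw [e1] at e2
      simp only [List.cons.injEq] at e2
      rcases hne with hne | hne
      · exact hne e2.1
      · exact hne e2.2.1
  · -- x.val = cc :: z2.val
    have hsub : z2.val <:+ x.val := by rw [hcc]; exact List.suffix_cons cc _
    have h2 : (c'::a'::b'::r) <:+ x.val := hz2.trans hsub
    have h1 : (c::a::b::r) <:+ x.val := by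
      refine suffix_of_suffix_le hdp hzp ?_
      have := hz2.length_le
      rw [hcc]
      simp at this ⊢
      omega
    have := suffix_eq_of_length h1 h2 (by simp)
    simp only [List.cons.injEq] at this
    rcases hne with hne | hne
    · exact hne this.2.1
    · exact hne this.2.2.1

lemma not_sub {α : Type*} {r p z : List α} {c a b c' a' b' : α} (hne : a ≠ a' ∨ b ≠ b')
    (hzp : z <:+ p) (hdp : (c::a::b::r) <:+ p) : ¬ ((c'::a'::b'::r) <:+ z) := by
  intro hcon
  have h1 : (c::a::b::r) <:+ z := by
    refine suffix_of_suffix_le hdp hzp ?_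
    have := hcon.length_le
    simp at this ⊢
    omega
  have := suffix_eq_of_length h1 hcon (by simp)
  simp only [List.cons.injEq] at this
  rcases hne with hne | hne
  · exact hne this.2.1
  · exact hne this.2.2.1

lemma up_cross {m h : ℕ} (f : Vtx m h → ℕ) (θ : ℕ) (d : List (Fin m)) (hd : d.length ≤ h) :
    ∀ (s : List (Fin m)) (hsd : (s ++ d).length ≤ h),
      f ⟨s ++ d, hsd⟩ ≤ θ → θ < f ⟨d, hd⟩ →
      ∃ x y : Vtx m h, (completeMaryTree m h).Adj x y ∧ f x ≤ θ ∧ θ < f y ∧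
        x.val <:+ s ++ d ∧ y.val <:+ s ++ d ∧ d <:+ x.val ∧ d <:+ y.val := by
  intro s
  induction s with
  | nil =>
    intro hsd h1 h2
    have e : (⟨[] ++ d, hsd⟩ : Vtx m h) = ⟨d, hd⟩ := Subtype.ext (List.nil_append d)
    rw [e] at h1
    omega
  | cons a s ih =>
    intro hsd h1 h2
    have hs' : (s ++ d).length ≤ h := by simp at hsd ⊢; omega
    have hstep : (s ++ d) <:+ (a::s) ++ d := by
      rw [List.cons_append]; exact List.suffix_cons a _
    by_cases hc : f ⟨s ++ d, hs'⟩ ≤ θ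
    · obtain ⟨x, y, hadj, hfx, hfy, hxs, hys, hdx, hdy⟩ := ih hs' hc h2
      exact ⟨x, y, hadj, hfx, hfy, hxs.trans hstep, hys.trans hstep, hdx, hdy⟩
    · refine ⟨⟨(a::s) ++ d, hsd⟩, ⟨s ++ d, hs'⟩, (adj_cons a (s ++ d) hs' hsd).symm,
        h1, by omega, List.suffix_rfl, hstep, ?_, List.suffix_append s d⟩
      exact (List.suffix_append s d).trans hstep

lemma down_cross {m h : ℕ} (f : Vtx m h → ℕ) (θ : ℕ) (d : List (Fin m)) (hd : d.length ≤ h) :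
    ∀ (s : List (Fin m)) (hsd : (s ++ d).length ≤ h),
      f ⟨d, hd⟩ ≤ θ → θ < f ⟨s ++ d, hsd⟩ →
      ∃ x y : Vtx m h, (completeMaryTree m h).Adj x y ∧ f x ≤ θ ∧ θ < f y ∧
        x.val <:+ s ++ d ∧ y.val <:+ s ++ d ∧ d <:+ x.val ∧ d <:+ y.val := by
  intro s
  induction s with
  | nil =>
    intro hsd h1 h2
    have e : (⟨[] ++ d, hsd⟩ : Vtx m h) = ⟨d, hd⟩ := Subtype.ext (List.nil_append d)
    rw [e] at h2
    omega
  | cons a s ih =>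
    intro hsd h1 h2
    have hs' : (s ++ d).length ≤ h := by simp at hsd ⊢; omega
    have hstep : (s ++ d) <:+ (a::s) ++ d := by
      rw [List.cons_append]; exact List.suffix_cons a _
    by_cases hc : θ < f ⟨s ++ d, hs'⟩
    · obtain ⟨x, y, hadj, hfx, hfy, hxs, hys, hdx, hdy⟩ := ih hs' h1 hc
      exact ⟨x, y, hadj, hfx, hfy, hxs.trans hstep, hys.trans hstep, hdx, hdy⟩
    · refine ⟨⟨s ++ d, hs'⟩, ⟨(a::s) ++ d, hsd⟩, adj_cons a (s ++ d) hs' hsd,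
        by omega, h2, hstep, List.suffix_rfl, List.suffix_append s d, ?_⟩
      exact (List.suffix_append s d).trans hstep


lemma step_core {m h n : ℕ} {f : Vtx m h → ℕ} {r : List (Fin m)} (hn : 0 < n)
    (c a₁ b₁ a₂ b₂ a₃ b₃ : Fin m)
    (h12 : a₁ ≠ a₂ ∨ b₁ ≠ b₂) (h32 : a₃ ≠ a₂ ∨ b₃ ≠ b₂)
    (hr : r.length ≤ h)
    {θ₁ θ₂ θ₃ : ℕ} (hθ12 : θ₁ ≤ θ₂) (hθ23 : θ₂ ≤ θ₃)
    (H1 : Str m h f n (c::a₁::b₁::r) θ₁)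
    (H2 : Str m h f n (c::a₂::b₂::r) θ₂)
    (H3 : Str m h f n (c::a₃::b₃::r) θ₃) :
    Str m h f (n+1) r θ₂ := by
  obtain ⟨u₁, w₁, -, hu₁s, -, hu₁f, -, -, -⟩ := H1
  obtain ⟨u₂, w₂, hinj₂, hu₂s, hw₂s, hu₂f, hw₂f, hadj₂, hcr₂⟩ := H2
  obtain ⟨u₃, w₃, -, -, hw₃s, -, hw₃f, -, -⟩ := H3
  have i₀ : Fin n := ⟨0, hn⟩
  have hp : f (u₁ i₀) ≤ θ₂ := le_trans (hu₁f i₀) hθ12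
  have hq : θ₂ < f (w₃ i₀) := lt_of_le_of_lt hθ23 (hw₃f i₀)
  have hdp : (c::a₁::b₁::r) <:+ (u₁ i₀).val := hu₁s i₀
  have hdq : (c::a₃::b₃::r) <:+ (w₃ i₀).val := hw₃s i₀
  have hrp : r <:+ (u₁ i₀).val := List.IsSuffix.trans ⟨[c,a₁,b₁], rfl⟩ hdp
  have hrq : r <:+ (w₃ i₀).val := List.IsSuffix.trans ⟨[c,a₃,b₃], rfl⟩ hdq
  have key : ∃ x y : Vtx m h, (completeMaryTree m h).Adj x y ∧ f x ≤ θ₂ ∧ θ₂ < f y ∧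
      r <:+ x.val ∧ r <:+ y.val ∧
      (∀ z2 : Vtx m h, (c::a₂::b₂::r) <:+ z2.val →
        ¬ (completeMaryTree m h).Adj x z2 ∧ ¬ (completeMaryTree m h).Adj y z2) ∧
      ¬ ((c::a₂::b₂::r) <:+ x.val) := by
    by_cases hcr : f ⟨r, hr⟩ ≤ θ₂
    · obtain ⟨s, hs⟩ := hrq
      have hsd : (s ++ r).length ≤ h := by rw [hs]; exact (w₃ i₀).2
      have hq' : θ₂ < f ⟨s ++ r, hsd⟩ := by
        have e : (⟨s ++ r, hsd⟩ : Vtx m h) = w₃ i₀ := Subtype.ext hs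
        rw [e]; exact hq
      obtain ⟨x, y, hadj, hfx, hfy, hxs, hys, hrx, hry⟩ := down_cross f θ₂ r hr s hsd hcr hq'
      rw [hs] at hxs hys
      exact ⟨x, y, hadj, hfx, hfy, hrx, hry,
        fun z2 hz2 => ⟨na h32 hxs hdq hz2, na h32 hys hdq hz2⟩,
        not_sub h32 hxs hdq⟩
    · obtain ⟨s, hs⟩ := hrp
      have hsd : (s ++ r).length ≤ h := by rw [hs]; exact (u₁ i₀).2
      have hp' : f ⟨s ++ r, hsd⟩ ≤ θ₂ := by
        have e : (⟨s ++ r, hsd⟩ : Vtx m h) = u₁ i₀ := Subtype.ext hs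
        rw [e]; exact hp
      obtain ⟨x, y, hadj, hfx, hfy, hxs, hys, hrx, hry⟩ :=
        up_cross f θ₂ r hr s hsd hp' (by omega)
      rw [hs] at hxs hys
      exact ⟨x, y, hadj, hfx, hfy, hrx, hry,
        fun z2 hz2 => ⟨na h12 hxs hdp hz2, na h12 hys hdp hz2⟩,
        not_sub h12 hxs hdp⟩
  obtain ⟨x, y, hadj, hfx, hfy, hrx, hry, hno, hnotin⟩ := key
  have hrsub : r <:+ (c::a₂::b₂::r) := ⟨[c,a₂,b₂], rfl⟩
  refine ⟨Fin.cons x u₂, Fin.cons y w₂, ?_, ?_, ?_, ?_, ?_, ?_, ?_⟩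
  · -- injectivity
    intro i j e
    rcases Fin.eq_zero_or_eq_succ i with rfl | ⟨i', rfl⟩ <;>
      rcases Fin.eq_zero_or_eq_succ j with rfl | ⟨j', rfl⟩
    · rfl
    · simp only [Fin.cons_zero, Fin.cons_succ] at e
      exact absurd (e ▸ hu₂s j') hnotin
    · simp only [Fin.cons_zero, Fin.cons_succ] at e
      exact absurd (e ▸ hu₂s i') hnotin
    · simp only [Fin.cons_succ] at e
      exact congrArg Fin.succ (hinj₂ e)
  · intro i
    rcases Fin.eq_zero_or_eq_succ i with rfl | ⟨i', rfl⟩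
    · simpa using hrx
    · simp only [Fin.cons_succ]; exact hrsub.trans (hu₂s i')
  · intro i
    rcases Fin.eq_zero_or_eq_succ i with rfl | ⟨i', rfl⟩
    · simpa using hry
    · simp only [Fin.cons_succ]; exact hrsub.trans (hw₂s i')
  · intro i
    rcases Fin.eq_zero_or_eq_succ i with rfl | ⟨i', rfl⟩
    · simpa using hfx
    · simpa using hu₂f i'
  · intro i
    rcases Fin.eq_zero_or_eq_succ i with rfl | ⟨i', rfl⟩
    · simpa using hfy
    · simpa using hw₂f i'
  · intro i
    rcases Fin.eq_zero_or_eq_succ i with rfl | ⟨i', rfl⟩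
    · simpa using hadj
    · simpa using hadj₂ i'
  · intro i j hij
    rcases Fin.eq_zero_or_eq_succ i with rfl | ⟨i', rfl⟩ <;>
      rcases Fin.eq_zero_or_eq_succ j with rfl | ⟨j', rfl⟩
    · exact absurd rfl hij
    · simp only [Fin.cons_zero, Fin.cons_succ]
      exact fun H => (hno (u₂ j') (hu₂s j')).2 H.symm
    · simp only [Fin.cons_zero, Fin.cons_succ]
      exact (hno (w₂ i') (hw₂s i')).1
    · simp only [Fin.cons_succ]
      exact hcr₂ i' j' (fun e => hij (congrArg Fin.succ e))


lemma master {m h : ℕ} (hm : 1 < m) (f : Vtx m h → ℕ) (hf : Function.Injective f) :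
    ∀ (n : ℕ) (r : List (Fin m)), r.length + 3 * n ≤ h → ∃ θ, Str m h f n r θ := by
  intro n
  induction n with
  | zero =>
    intro r hr
    exact ⟨0, Fin.elim0, Fin.elim0, fun i => i.elim0, fun i => i.elim0, fun i => i.elim0,
      fun i => i.elim0, fun i => i.elim0, fun i => i.elim0, fun i => i.elim0⟩
  | succ n ih =>
    intro r hr
    rcases Nat.eq_zero_or_pos n with rfl | hn
    · -- base case: a single placed vertex with an unplaced neighbour
      have hr3 : r.length + 3 ≤ h := by omega
      set vr : Vtx m h := ⟨r, by omega⟩ with hvr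
      set v0 : Vtx m h := ⟨(⟨0, by omega⟩ : Fin m)::r, by simp; omega⟩ with hv0
      have hvne : vr ≠ v0 := by
        intro e
        exact List.cons_ne_self _ _ (congrArg Subtype.val e).symm
      have hfne : f vr ≠ f v0 := fun e => hvne (hf e)
      have hadj : (completeMaryTree m h).Adj vr v0 := adj_cons _ r _ _
      have fin1 : ∀ i j : Fin (0+1), i = j := fun i j => Fin.ext (by omega)
      rcases lt_or_gt_of_ne hfne with hlt | hlt
      · exact ⟨f vr, fun _ => vr, fun _ => v0, fun i j _ => fin1 i j,
          fun _ => List.suffix_rfl, fun _ => List.suffix_cons _ _, fun _ => le_rfl,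
          fun _ => hlt, fun _ => hadj, fun i j hij => absurd (fin1 i j) hij⟩
      · exact ⟨f v0, fun _ => v0, fun _ => vr, fun i j _ => fin1 i j,
          fun _ => List.suffix_cons _ _, fun _ => List.suffix_rfl, fun _ => le_rfl,
          fun _ => hlt, fun _ => hadj.symm, fun i j hij => absurd (fin1 i j) hij⟩
    · -- inductive step via three depth-3 subtrees
      obtain ⟨z0, z1, h01⟩ : ∃ a b : Fin m, a ≠ b :=
        ⟨⟨0, by omega⟩, ⟨1, hm⟩, by simp [Fin.ext_iff]⟩
      have budget : ∀ (a b : Fin m), (z0::a::b::r).length + 3 * n ≤ h := by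
        intro a b; simp; omega
      have hrh : r.length ≤ h := by omega
      obtain ⟨θA, HA⟩ := ih (z0::z0::z0::r) (budget _ _)
      obtain ⟨θB, HB⟩ := ih (z0::z1::z0::r) (budget _ _)
      obtain ⟨θC, HC⟩ := ih (z0::z0::z1::r) (budget _ _)
      -- tags: A = (z0,z0), B = (z1,z0), C = (z0,z1)
      rcases le_total θA θB with h1 | h1 <;> rcases le_total θB θC with h2 | h2 <;>
        rcases le_total θA θC with h3 | h3
      · exact ⟨θB, step_core hn z0 z0 z0 z1 z0 z0 z1 (Or.inl h01) (Or.inl h01)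
          hrh h1 h2 HA HB HC⟩
      · exact ⟨θB, step_core hn z0 z0 z0 z1 z0 z0 z1 (Or.inl h01) (Or.inl h01)
          hrh h1 h2 HA HB HC⟩
      · exact ⟨θC, step_core hn z0 z0 z0 z0 z1 z1 z0 (Or.inr h01) (Or.inl h01.symm)
          hrh h3 h2 HA HC HB⟩
      · exact ⟨θA, step_core hn z0 z0 z1 z0 z0 z1 z0 (Or.inr h01.symm) (Or.inl h01.symm)
          hrh h3 h1 HC HA HB⟩
      · exact ⟨θA, step_core hn z0 z1 z0 z0 z0 z0 z1 (Or.inl h01.symm) (Or.inr h01.symm)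
          hrh h1 h3 HB HA HC⟩
      · exact ⟨θC, step_core hn z0 z1 z0 z0 z1 z0 z0 (Or.inl h01.symm) (Or.inr h01)
          hrh h2 h3 HB HC HA⟩
      · exact ⟨θB, step_core hn z0 z0 z1 z1 z0 z0 z0 (Or.inl h01) (Or.inl h01)
          hrh h2 h1 HC HB HA⟩
      · exact ⟨θB, step_core hn z0 z0 z1 z1 z0 z0 z0 (Or.inl h01) (Or.inl h01)
          hrh h2 h1 HC HB HA⟩

end ThinAux

/-- The thinness of the complete `m`-ary tree of height `h` is at least `c·h` for some
constant `c > 0` depending only on `m`; in particular it is unbounded as `h → ∞`. -/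
theorem completeMaryTree_thinness_linear (m : ℕ) (hm : 1 < m) :
    ∃ c : ℝ, 0 < c ∧ ∀ h k : ℕ, IsKThin (completeMaryTree m h) k → c * h ≤ k := by
  refine ⟨1/6, by norm_num, ?_⟩
  intro h k hthin
  obtain ⟨col, f, hf, hcons⟩ := hthin
  have hk1 : 1 ≤ k := by
    rcases Nat.eq_zero_or_pos k with rfl | h1
    · exact (col ⟨[], by simp⟩).elim0
    · exact h1
  obtain ⟨θ, u, w, huinj, hus, hws, hu, hw, hadj, hcross⟩ :=
    ThinAux.master hm f hf (h / 3) [] (by simp; omega)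
  have hinj : Function.Injective (fun i => col (u i)) := by
    intro i j hij
    by_contra hne
    have hune : u i ≠ u j := fun e => hne (huinj e)
    have hfne : f (u i) ≠ f (u j) := fun e => hune (hf e)
    rcases hfne.lt_or_gt with hlt | hlt
    · exact hcross i j hne
        (hcons (u i) (u j) (w i) hlt (lt_of_le_of_lt (hu j) (hw i)) hij (hadj i))
    · exact hcross j i (fun e => hne e.symm)
        (hcons (u j) (u i) (w j) hlt (lt_of_le_of_lt (hu i) (hw j)) hij.symm (hadj j))
  have hcard : h / 3 ≤ k := by simpa using Fintype.card_le_of_injective _ hinj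
  have hhk : h ≤ 6 * k := by omega
  have : (h : ℝ) ≤ 6 * (k : ℝ) := by exact_mod_cast hhk
  linarith
end

section
/- The (r × r)-grid graph has thinness at least c·r for some absolute constant c > 0. -/
lemma grid_adj_iff_s5 {r : ℕ} (p q : Fin r × Fin r) :
    (gridGraph r r).Adj p q ↔ p ≠ q ∧
      ((((p.1 : ℕ) + 1 = (q.1 : ℕ) ∨ (q.1 : ℕ) + 1 = (p.1 : ℕ)) ∧ (p.2 : ℕ) = (q.2 : ℕ)) ∨
       (((p.2 : ℕ) + 1 = (q.2 : ℕ) ∨ (q.2 : ℕ) + 1 = (p.2 : ℕ)) ∧ (p.1 : ℕ) = (q.1 : ℕ))) := by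
  simp only [gridGraph, SimpleGraph.fromRel_adj, ← Fin.val_inj]
  constructor <;> rintro ⟨h1, h2⟩ <;> exact ⟨h1, by omega⟩

lemma crossing (P : ℕ → Prop) {r a b : ℕ} (ha : a < r) (hb : b < r) (hPa : P a) (hPb : ¬ P b) :
    ∃ j, j + 1 < r ∧ ((P j ∧ ¬ P (j+1)) ∨ (¬ P j ∧ P (j+1))) := by
  by_contra hcon
  push_neg at hcon
  have step : ∀ j, j + 1 < r → (P j ↔ P (j+1)) := by
    intro j hj
    have := hcon j hj
    tauto
  have key : ∀ j, j < r → (P 0 ↔ P j) := by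
    intro j
    induction j with
    | zero => intro _; rfl
    | succ n ih =>
        intro h
        have h1 := ih (by omega)
        have h2 := step n (by omega)
        tauto
  have k1 := key a ha
  have k2 := key b hb
  tauto

lemma grid_degree {r : ℕ} (w : Fin r × Fin r) (T : Finset (Fin r × Fin r))
    (hT : ∀ v ∈ T, (gridGraph r r).Adj w v) : T.card ≤ 4 := by
  have h : T.card ≤ (Finset.univ : Finset (Bool × Bool)).card := by
    apply Finset.card_le_card_of_injOn
      (fun v => ((decide ((v.2 : ℕ) = (w.2 : ℕ)),
        decide ((v.1 : ℕ) + (v.2 : ℕ) < (w.1 : ℕ) + (w.2 : ℕ))) : Bool × Bool))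
    · intro _ _; exact Finset.mem_univ _
    · intro v1 h1 v2 h2 heq
      have a1 := ((grid_adj_iff_s5 w v1).mp (hT v1 h1)).2
      have a2 := ((grid_adj_iff_s5 w v2).mp (hT v2 h2)).2
      have e1 : ((v1.2 : ℕ) = (w.2 : ℕ)) ↔ ((v2.2 : ℕ) = (w.2 : ℕ)) := by
        have := congrArg Prod.fst heq
        simpa [decide_eq_decide] using this
      have e2 : ((v1.1 : ℕ) + (v1.2 : ℕ) < (w.1 : ℕ) + (w.2 : ℕ)) ↔
          ((v2.1 : ℕ) + (v2.2 : ℕ) < (w.1 : ℕ) + (w.2 : ℕ)) := by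
        have := congrArg Prod.snd heq
        simpa [decide_eq_decide] using this
      have hv : (v1.1 : ℕ) = (v2.1 : ℕ) ∧ (v1.2 : ℕ) = (v2.2 : ℕ) := by omega
      exact Prod.ext_iff.mpr ⟨Fin.val_inj.mp hv.1, Fin.val_inj.mp hv.2⟩
  simpa using h

lemma adj_horiz {r : ℕ} (i : Fin r) (j j' : Fin r) (h : (j : ℕ) + 1 = (j' : ℕ)) :
    (gridGraph r r).Adj (i, j) (i, j') := by
  rw [grid_adj_iff_s5]
  refine ⟨?_, Or.inr ⟨Or.inl h, rfl⟩⟩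
  intro he
  have : (j : ℕ) = (j' : ℕ) := by rw [Prod.ext_iff] at he; exact congrArg Fin.val he.2
  omega

lemma adj_vert {r : ℕ} (i i' : Fin r) (j : Fin r) (h : (i : ℕ) + 1 = (i' : ℕ)) :
    (gridGraph r r).Adj (i, j) (i', j) := by
  rw [grid_adj_iff_s5]
  refine ⟨?_, Or.inl ⟨Or.inl h, rfl⟩⟩
  intro he
  have : (i : ℕ) = (i' : ℕ) := by rw [Prod.ext_iff] at he; exact congrArg Fin.val he.1
  omega

open Finset in
lemma grid_thin_bound {r k : ℕ} (hr : 2 ≤ r) (h : IsKThin (gridGraph r r) k) : r ≤ 8 * k := by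
  classical
  obtain ⟨c, f, finj, hthin⟩ := h
  -- rank function
  set rank : Fin r × Fin r → ℕ := fun v => (univ.filter (fun x => f x < f v)).card with hrank
  have hmono : ∀ u v, f u < f v → rank u < rank v := by
    intro u v huv
    apply Finset.card_lt_card
    constructor
    · intro x hx
      simp only [mem_filter, mem_univ, true_and] at *
      omega
    · intro hsub
      have := hsub (mem_filter.mpr ⟨mem_univ u, huv⟩)
      simp only [mem_filter, mem_univ, true_and] at this
      omega
  have hiff : ∀ u v, rank u < rank v ↔ f u < f v := by
    intro u v
    constructor
    · intro hlt
      by_contra h'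
      push_neg at h'
      rcases eq_or_lt_of_le h' with he | hl
      · have : v = u := finj he
        subst this; omega
      · have := hmono v u hl; omega
    · exact hmono u v
  have rinj : Function.Injective rank := by
    intro u v huv
    have h1 := hiff u v
    have h2 := hiff v u
    have : f u = f v := by omega
    exact finj this
  have hlt : ∀ v, rank v < r * r := by
    intro v
    have hss : (univ.filter (fun x => f x < f v)) ⊂ univ := by
      rw [Finset.ssubset_univ_iff]
      intro heq
      have : v ∈ univ.filter (fun x => f x < f v) := by rw [heq]; exact mem_univ v
      simp at this
    have := Finset.card_lt_card hss
    simpa using this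
  have hsurj : ∀ j, j < r * r → ∃ v, rank v = j := by
    have hbij : Function.Bijective (fun v : Fin r × Fin r => (⟨rank v, hlt v⟩ : Fin (r*r))) := by
      rw [Fintype.bijective_iff_injective_and_card]
      constructor
      · intro u v huv
        exact rinj (congrArg Fin.val huv)
      · simp
    intro j hj
    obtain ⟨v, hv⟩ := hbij.2 ⟨j, hj⟩
    exact ⟨v, congrArg Fin.val hv⟩
  set N := r * r / 2 with hN
  set S : Finset (Fin r × Fin r) := univ.filter (fun v => rank v < N) with hS
  have hNle : N ≤ r * r := Nat.div_le_self _ _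
  have hmemS : ∀ v, v ∈ S ↔ rank v < N := by intro v; simp [hS]
  have hScard : S.card = N := by
    rw [show N = (Finset.range N).card from (Finset.card_range N).symm]
    apply Finset.card_nbij rank
    · intro a ha
      rw [Finset.mem_coe, Finset.mem_range]
      exact (hmemS a).mp ha
    · exact fun x _ y _ hxy => rinj hxy
    · intro j hj
      simp only [Finset.coe_range, Set.mem_Iio] at hj
      obtain ⟨v, hv⟩ := hsurj j (lt_of_lt_of_le hj hNle)
      exact ⟨v, by simp [hmemS, hv, hj], hv⟩
  -- the boundary
  set B : Finset (Fin r × Fin r) :=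
    S.filter (fun v => ∃ w, (gridGraph r r).Adj v w ∧ N ≤ rank w) with hB
  have hBcard : B.card ≤ 4 * k := by
    rw [Finset.card_eq_sum_card_fiberwise (f := c) (t := univ) (fun x _ => mem_univ _)]
    have hfib : ∀ i : Fin k, (B.filter fun v => c v = i).card ≤ 4 := by
      intro i
      rcases (B.filter fun v => c v = i).eq_empty_or_nonempty with he | hne
      · simp [he]
      · obtain ⟨u, hu, humin⟩ := Finset.exists_min_image _ rank hne
        have huB : u ∈ B := (mem_filter.mp hu).1
        obtain ⟨w, hadj, hwN⟩ := (mem_filter.mp huB).2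
        apply grid_degree w
        intro v hv
        have hvB : v ∈ B := (mem_filter.mp hv).1
        have hvS : v ∈ S := (mem_filter.mp hvB).1
        have hvN : rank v < N := (hmemS v).mp hvS
        by_cases hvu : v = u
        · subst hvu; exact hadj.symm
        · have hru : rank u < rank v :=
            lt_of_le_of_ne (humin v hv) (fun e => hvu (rinj e.symm))
          have h1 : f u < f v := (hiff u v).mp hru
          have huS : u ∈ S := (mem_filter.mp huB).1
          have h2 : f v < f w := (hiff v w).mp (lt_of_lt_of_le hvN hwN)
          have hcuv : c u = c v := by
            have := (mem_filter.mp hu).2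
            have := (mem_filter.mp hv).2
            simp_all
          exact (hthin u v w h1 h2 hcuv hadj).symm
    calc ∑ i : Fin k, (B.filter fun v => c v = i).card ≤ ∑ _i : Fin k, 4 :=
          Finset.sum_le_sum (fun i _ => hfib i)
      _ = 4 * k := by simp [mul_comm]
  -- rows
  set nrow : Fin r → ℕ := fun i => (S.filter (fun v => v.1 = i)).card with hnrow
  have hrowuniv : ∀ i : Fin r, (univ.filter (fun v : Fin r × Fin r => v.1 = i)).card = r := by
    intro i
    have h : (univ.filter (fun v : Fin r × Fin r => v.1 = i)).card
        = (univ : Finset (Fin r)).card := by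
      apply Finset.card_nbij Prod.snd
      · intro a _; exact mem_univ _
      · intro x hx y hy hxy
        simp only [coe_filter, Set.mem_setOf_eq, mem_univ, true_and] at hx hy
        exact Prod.ext_iff.mpr ⟨hx.trans hy.symm, hxy⟩
      · intro j _
        exact ⟨(i, j), by simp, rfl⟩
    simpa using h
  have hnrow_le : ∀ i, nrow i ≤ r := by
    intro i
    rw [← hrowuniv i]
    exact Finset.card_le_card (Finset.filter_subset_filter _ (Finset.filter_subset _ _))
  have hsum : ∑ i, nrow i = N := by
    rw [← hScard]
    exact (Finset.card_eq_sum_card_fiberwise (f := Prod.fst) (t := univ)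
      (fun x _ => mem_univ _)).symm
  have hfull : ∀ i, nrow i = r → ∀ j, (i, j) ∈ S := by
    intro i hi j
    have heq : S.filter (fun v => v.1 = i) = univ.filter (fun v : Fin r × Fin r => v.1 = i) := by
      apply Finset.eq_of_subset_of_card_le
      · exact Finset.filter_subset_filter _ (Finset.filter_subset _ _)
      · rw [hrowuniv i]; exact hi.ge
    have hm : (i, j) ∈ univ.filter (fun v : Fin r × Fin r => v.1 = i) := by simp
    rw [← heq] at hm
    exact (mem_filter.mp hm).1
  have hempty : ∀ i, nrow i = 0 → ∀ j, (i, j) ∉ S := by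
    intro i hi j hmem
    have : (i, j) ∈ S.filter (fun v => v.1 = i) := mem_filter.mpr ⟨hmem, rfl⟩
    rw [Finset.card_eq_zero.mp hi] at this
    exact absurd this (Finset.notMem_empty _)
  -- mixed rows give boundary vertices
  have hnotS : ∀ v, v ∉ S → N ≤ rank v := by
    intro v hv
    by_contra h'
    exact hv ((hmemS v).mpr (by omega))
  have hmkB : ∀ v w, v ∈ S → w ∉ S → (gridGraph r r).Adj v w → v ∈ B := by
    intro v w hvS hwS hadj
    exact mem_filter.mpr ⟨hvS, w, hadj, hnotS w hwS⟩
  have hmixed : ∀ i : Fin r, 0 < nrow i → nrow i < r → ∃ v ∈ B, v.1 = i := by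
    intro i h0 hr'
    obtain ⟨v0, hv0⟩ := Finset.card_pos.mp h0
    have hv0S : v0 ∈ S := (mem_filter.mp hv0).1
    have hv01 : v0.1 = i := (mem_filter.mp hv0).2
    have hj1 : (i, v0.2) ∈ S := by rwa [← hv01, Prod.mk.eta]
    have hexj2 : ∃ j2 : Fin r, (i, j2) ∉ S := by
      by_contra hc
      push_neg at hc
      have hsub : univ.filter (fun v : Fin r × Fin r => v.1 = i) ⊆
          S.filter (fun v => v.1 = i) := by
        intro v hv
        have hv1 : v.1 = i := (mem_filter.mp hv).2
        refine mem_filter.mpr ⟨?_, hv1⟩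
        have := hc v.2
        rwa [← hv1, Prod.mk.eta] at this
      have hcc := Finset.card_le_card hsub
      rw [hrowuniv i] at hcc
      exact absurd hr' (not_lt.mpr hcc)
    obtain ⟨j2, hj2⟩ := hexj2
    set P : ℕ → Prop := fun j => ∃ hj : j < r, (i, (⟨j, hj⟩ : Fin r)) ∈ S with hP
    have hPa : P (v0.2 : ℕ) := ⟨v0.2.isLt, by simpa using hj1⟩
    have hPb : ¬ P (j2 : ℕ) := by
      rintro ⟨hj, hmem⟩
      exact hj2 (by simpa using hmem)
    obtain ⟨j, hjr, hcase⟩ := crossing P v0.2.isLt j2.isLt hPa hPb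
    rcases hcase with ⟨hPj, hPj1⟩ | ⟨hPj, hPj1⟩
    · obtain ⟨hj, hmem⟩ := hPj
      refine ⟨(i, ⟨j, hj⟩), hmkB _ (i, ⟨j+1, hjr⟩) hmem ?_ (adj_horiz _ _ _ rfl), rfl⟩
      intro hc
      exact hPj1 ⟨hjr, hc⟩
    · obtain ⟨hj, hmem⟩ := hPj1
      refine ⟨(i, ⟨j+1, hjr⟩), hmkB _ (i, ⟨j, by omega⟩) hmem ?_
        ((adj_horiz i (⟨j, by omega⟩ : Fin r) (⟨j+1, hjr⟩ : Fin r) rfl).symm), rfl⟩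
      intro hc
      exact hPj ⟨by omega, hc⟩
  -- case split on number of mixed rows
  set M : Finset (Fin r) := univ.filter (fun i => 0 < nrow i ∧ nrow i < r) with hM
  by_cases hMbig : r ≤ 2 * M.card
  · have hsub : M ⊆ B.image Prod.fst := by
      intro i hi
      have := (mem_filter.mp hi).2
      obtain ⟨v, hvB, hv1⟩ := hmixed i this.1 this.2
      exact Finset.mem_image.mpr ⟨v, hvB, hv1⟩
    have h1 : M.card ≤ B.card :=
      le_trans (Finset.card_le_card hsub) Finset.card_image_le
    omega
  · push_neg at hMbig
    have hM2 : 2 * M.card ≤ r - 1 := by omega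
    -- there is a full row
    have hA : ∃ i, nrow i = r := by
      by_contra hc
      push_neg at hc
      have hvanish : ∀ i ∈ univ, i ∉ M → nrow i = 0 := by
        intro i _ hiM
        have h1 := hc i
        have h2 := hnrow_le i
        simp only [hM, mem_filter, mem_univ, true_and, not_and, not_lt] at hiM
        omega
      have hsumM : ∑ i ∈ M, nrow i = N := by
        rw [← hsum]
        exact Finset.sum_subset (Finset.subset_univ M) (fun i h1 h2 => hvanish i h1 h2)
      have hle : ∑ i ∈ M, nrow i ≤ M.card * r :=
        Finset.sum_le_card_nsmul M nrow r (fun i _ => hnrow_le i)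
      have hXN : N ≤ M.card * r := by omega
      have h6 : 2 * (M.card * r) ≤ r * r - r := by
        calc 2 * (M.card * r) = 2 * M.card * r := (mul_assoc 2 M.card r).symm
          _ ≤ (r - 1) * r := Nat.mul_le_mul_right r hM2
          _ = r * r - r := Nat.sub_one_mul r r
      have h5 : N = r * r / 2 := hN
      have hrr : r ≤ r * r := Nat.le_mul_of_pos_left r (by omega)
      omega
    -- there is an empty row
    have hE : ∃ i, nrow i = 0 := by
      by_contra hc
      push_neg at hc
      have hfull' : ∀ i ∈ univ \ M, nrow i = r := by
        intro i hi
        have hiM : i ∉ M := (Finset.mem_sdiff.mp hi).2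
        have h1 := hc i
        have h2 := hnrow_le i
        simp only [hM, mem_filter, mem_univ, true_and, not_and, not_lt] at hiM
        omega
      have hge : (r - M.card) * r ≤ ∑ i ∈ univ \ M, nrow i := by
        rw [Finset.sum_congr rfl hfull', Finset.sum_const, smul_eq_mul]
        have : (univ \ M).card = r - M.card := by
          rw [Finset.card_sdiff_of_subset (Finset.subset_univ M)]
          simp
        rw [this]
      have hle2 : ∑ i ∈ univ \ M, nrow i ≤ N := by
        rw [← hsum]
        exact Finset.sum_le_sum_of_subset (Finset.subset_univ _)
      have hYN : (r - M.card) * r ≤ N := le_trans hge hle2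
      have h6 : r * r + r ≤ 2 * ((r - M.card) * r) := by
        calc r * r + r = (r + 1) * r := by ring
          _ ≤ (2 * (r - M.card)) * r := Nat.mul_le_mul_right r (by omega)
          _ = 2 * ((r - M.card) * r) := mul_assoc 2 (r - M.card) r
      have h5 : N = r * r / 2 := hN
      omega
    obtain ⟨i0, hi0⟩ := hA
    obtain ⟨i1, hi1⟩ := hE
    have hcolB : ∀ j : Fin r, ∃ v ∈ B, v.2 = j := by
      intro j
      set P : ℕ → Prop := fun a => ∃ ha : a < r, ((⟨a, ha⟩ : Fin r), j) ∈ S with hP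
      have hPa : P (i0 : ℕ) := ⟨i0.isLt, by simpa using hfull i0 hi0 j⟩
      have hPb : ¬ P (i1 : ℕ) := by
        rintro ⟨ha, hmem⟩
        exact hempty i1 hi1 j (by simpa using hmem)
      obtain ⟨a, har, hcase⟩ := crossing P i0.isLt i1.isLt hPa hPb
      rcases hcase with ⟨hPj, hPj1⟩ | ⟨hPj, hPj1⟩
      · obtain ⟨ha, hmem⟩ := hPj
        refine ⟨(⟨a, ha⟩, j), hmkB _ ((⟨a+1, har⟩ : Fin r), j) hmem ?_ (adj_vert _ _ _ rfl), rfl⟩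
        intro hc
        exact hPj1 ⟨har, hc⟩
      · obtain ⟨ha, hmem⟩ := hPj1
        refine ⟨(⟨a+1, har⟩, j), hmkB _ ((⟨a, by omega⟩ : Fin r), j) hmem ?_
          ((adj_vert (⟨a, by omega⟩ : Fin r) (⟨a+1, har⟩ : Fin r) j rfl).symm), rfl⟩
        intro hc
        exact hPj ⟨by omega, hc⟩
    have hsub : (univ : Finset (Fin r)) ⊆ B.image Prod.snd := by
      intro j _
      obtain ⟨v, hvB, hv2⟩ := hcolB j
      exact Finset.mem_image.mpr ⟨v, hvB, hv2⟩
    have h1 : r ≤ B.card := by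
      have := le_trans (Finset.card_le_card hsub) Finset.card_image_le
      simpa using this
    omega

/-- The `(r × r)`-grid has thinness at least `c·r` for some absolute constant `c > 0`. -/
theorem gridGraph_thinness_linear :
    ∃ c : ℝ, 0 < c ∧ ∀ r k : ℕ, IsKThin (gridGraph r r) k → c * r ≤ k := by
  refine ⟨1/8, by norm_num, ?_⟩
  intro r k hk
  rcases Nat.lt_or_ge r 2 with h | h
  · interval_cases r
    · simp
    · obtain ⟨c, f, -, -⟩ := hk
      have hk0 : k ≠ 0 := by
        rintro rfl
        exact (c ((0 : Fin 1), (0 : Fin 1))).elim0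
      have h1 : (1 : ℝ) ≤ (k : ℝ) := by
        exact_mod_cast Nat.one_le_iff_ne_zero.mpr hk0
      push_cast
      linarith
  · have h2 := grid_thin_bound h hk
    have h3 : (r : ℝ) ≤ 8 * (k : ℝ) := by exact_mod_cast h2
    linarith
end

section
/- For every d ≥ 1, the d-dimensional full grid (the strong product of d paths, i.e., the graph on {1,…,m}^d with edges between points at L∞-distance 1) is inversion-free proper 3^{d−1}-mixed-thin. -/
/-- The edge relation `E_{i,j}`: either `E(G)` or its complement (on distinct vertices),
according to the choice `compl i j`. -/
def mixedEdge {V : Type*} {k : ℕ} (G : SimpleGraph V) (compl : Fin k → Fin k → Prop)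
    (i j : Fin k) (u v : V) : Prop :=
  (compl i j ∧ u ≠ v ∧ ¬ G.Adj u v) ∨ (¬ compl i j ∧ G.Adj u v)

/-- `c`, `le`, `compl` witness that `G` is an inversion-free proper `k`-mixed-thin graph:
`c` is the partition into `k` parts, each `le i j` (for `i ≤ j`) is a linear order on
`V_i ∪ V_j` whose restrictions to `V_i` and `V_j` are `le i i` and `le j j`, and the
edge choices `E_{i,j}` (encoded by `compl`) satisfy conditions (b) and (c) of Definition 1. -/
def MixedThinWitness {V : Type*} {k : ℕ} (G : SimpleGraph V) (c : V → Fin k)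
    (le : Fin k → Fin k → V → V → Prop) (compl : Fin k → Fin k → Prop) : Prop :=
  ∀ i j : Fin k, i ≤ j →
    -- `le i j` is a linear order on `V_i ∪ V_j`
    (∀ u, (c u = i ∨ c u = j) → le i j u u) ∧
    (∀ u v, (c u = i ∨ c u = j) → (c v = i ∨ c v = j) →
      le i j u v → le i j v u → u = v) ∧
    (∀ u v w, (c u = i ∨ c u = j) → (c v = i ∨ c v = j) → (c w = i ∨ c w = j) →
      le i j u v → le i j v w → le i j u w) ∧
    (∀ u v, (c u = i ∨ c u = j) → (c v = i ∨ c v = j) → le i j u v ∨ le i j v u) ∧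
    -- inversion-free: restriction of `le i j` to each part equals the part's own order
    (∀ u v, c u = i → c v = i → (le i j u v ↔ le i i u v)) ∧
    (∀ u v, c u = j → c v = j → (le i j u v ↔ le j j u v)) ∧
    -- condition (b)
    (∀ u v w, ((c u = i ∧ c v = i ∧ c w = j) ∨ (c u = j ∧ c v = j ∧ c w = i)) →
      le i j u v → u ≠ v → le i j v w → v ≠ w →
      mixedEdge G compl i j u w → mixedEdge G compl i j v w) ∧
    -- condition (c)
    (∀ u v w, ((c v = i ∧ c w = i ∧ c u = j) ∨ (c v = j ∧ c w = j ∧ c u = i)) →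
      le i j u v → u ≠ v → le i j v w → v ≠ w →
      mixedEdge G compl i j u w → mixedEdge G compl i j u v)

/-- `G` is an inversion-free proper `k`-mixed-thin graph. -/
def InvFreeProperMixedThin {V : Type*} (G : SimpleGraph V) (k : ℕ) : Prop :=
  ∃ (c : V → Fin k) (le : Fin k → Fin k → V → V → Prop) (compl : Fin k → Fin k → Prop),
    MixedThinWitness G c le compl

/-- The `d`-dimensional full grid: the strong product of `d` paths on `m` vertices,
i.e. the graph on `{1,…,m}^d` with edges between distinct points at `L∞`-distance 1. -/
def fullGrid (d m : ℕ) : SimpleGraph (Fin d → Fin m) :=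
  SimpleGraph.fromRel (fun x y => ∀ i, (x i : ℕ) ≤ (y i : ℕ) + 1 ∧ (y i : ℕ) ≤ (x i : ℕ) + 1)

namespace MTG
open Finset

lemma digitBound (B : ℕ) (f : ℕ → ℕ) :
    ∀ n : ℕ, (∀ t, t < n → f t < B) → (∑ t ∈ range n, f t * B ^ t) < B ^ n := by
  intro n
  induction n with
  | zero => intro _; simp
  | succ n ih =>
    intro hf
    rw [sum_range_succ]
    have h1 := ih (fun t ht => hf t (by omega))
    have h2 : f n + 1 ≤ B := hf n (by omega)
    calc (∑ t ∈ range n, f t * B ^ t) + f n * B ^ n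
        < B ^ n + f n * B ^ n := Nat.add_lt_add_right h1 _
      _ = (1 + f n) * B ^ n := by ring
      _ ≤ B * B ^ n := Nat.mul_le_mul_right _ (by omega)
      _ = B ^ (n + 1) := by ring

lemma digitsInj (B : ℤ) :
    ∀ (n : ℕ) (f g : ℕ → ℤ),
      (∀ t, t < n → 0 ≤ f t ∧ f t < B ∧ 0 ≤ g t ∧ g t < B) →
      (∑ t ∈ range n, f t * B ^ t) = (∑ t ∈ range n, g t * B ^ t) →
      ∀ t, t < n → f t = g t := by
  intro n
  induction n with
  | zero => intro f g _ _ t ht; omega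
  | succ n ih =>
    intro f g hb hs t ht
    have e1 : ∀ h : ℕ → ℤ, (∑ x ∈ range (n+1), h x * B ^ x)
        = h 0 + B * ∑ x ∈ range n, h (x+1) * B ^ x := by
      intro h
      rw [Finset.sum_range_succ', Finset.mul_sum]
      simp only [pow_zero, mul_one]
      rw [add_comm]
      congr 1
      refine Finset.sum_congr rfl fun x _ => by ring
    have hs' : f 0 + B * (∑ x ∈ range n, f (x+1) * B ^ x)
        = g 0 + B * (∑ x ∈ range n, g (x+1) * B ^ x) := by
      rw [← e1 f, ← e1 g]; exact hs
    have hB : 0 < B := lt_of_le_of_lt (hb 0 (by omega)).1 (hb 0 (by omega)).2.1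
    have h00 : f 0 = g 0 := by
      have hm := congrArg (· % B) hs'
      simp only [Int.add_mul_emod_self_left] at hm
      rwa [Int.emod_eq_of_lt (hb 0 (by omega)).1 (hb 0 (by omega)).2.1,
           Int.emod_eq_of_lt (hb 0 (by omega)).2.2.1 (hb 0 (by omega)).2.2.2] at hm
    have htail : (∑ x ∈ range n, f (x+1) * B ^ x) = ∑ x ∈ range n, g (x+1) * B ^ x := by
      have h2 : B * (∑ x ∈ range n, f (x+1) * B ^ x)
          = B * (∑ x ∈ range n, g (x+1) * B ^ x) := by linarith
      exact mul_left_cancel₀ hB.ne' h2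
    cases t with
    | zero => exact h00
    | succ s =>
      exact ih (fun x => f (x+1)) (fun x => g (x+1))
        (fun x hx => hb (x+1) (by omega)) htail s (by omega)

/-- Coordinate access as a total function on `ℕ`. -/
def co {d m : ℕ} (u : Fin d → Fin m) (t : ℕ) : ℕ :=
  if h : t < d then (u ⟨t, h⟩ : ℕ) else 0

lemma co_spec {d m : ℕ} (u : Fin d → Fin m) (s : Fin d) : co u (s : ℕ) = (u s : ℕ) := by
  unfold co; rw [dif_pos s.isLt]

lemma co_lt {d m : ℕ} (u : Fin d → Fin m) (t : ℕ) (h : t < d) : co u t < m := by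
  unfold co; rw [dif_pos h]; exact (u _).isLt

/-- Residue mod 3 of coordinate `t+1`. -/
def resd {d m : ℕ} (u : Fin d → Fin m) (t : ℕ) : ℕ := co u (t+1) % 3

lemma resd_lt {d m : ℕ} (u : Fin d → Fin m) (t : ℕ) : resd u t < 3 :=
  Nat.mod_lt _ (by norm_num)

/-- The partition map: base-3 encoding of the residues of coordinates 1..d-1. -/
def enc {d m : ℕ} (u : Fin d → Fin m) : Fin (3 ^ (d - 1)) :=
  ⟨∑ t ∈ range (d-1), resd u t * 3 ^ t,
   digitBound 3 (fun t => resd u t) (d-1) (fun t _ => resd_lt u t)⟩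

lemma resd_eq {d m : ℕ} (u v : Fin d → Fin m) (h : enc u = enc v) :
    ∀ t, t < d - 1 → resd u t = resd v t := by
  intro t ht
  have hval : (∑ s ∈ range (d-1), resd u s * 3 ^ s)
      = ∑ s ∈ range (d-1), resd v s * 3 ^ s := congrArg Fin.val h
  have hz : (∑ s ∈ range (d-1), (resd u s : ℤ) * 3 ^ s)
      = ∑ s ∈ range (d-1), (resd v s : ℤ) * 3 ^ s := by exact_mod_cast hval
  have hh := digitsInj 3 (d-1) (fun s => (resd u s : ℤ)) (fun s => (resd v s : ℤ))
    (fun s _ => by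
      show (0:ℤ) ≤ (resd u s : ℤ) ∧ (resd u s : ℤ) < 3 ∧ (0:ℤ) ≤ (resd v s : ℤ) ∧ (resd v s : ℤ) < 3
      refine ⟨by positivity, by exact_mod_cast resd_lt u s,
              by positivity, by exact_mod_cast resd_lt v s⟩) hz t ht
  have hh2 : (resd u t : ℤ) = (resd v t : ℤ) := hh
  exact_mod_cast hh2

/-- Decode: residue at position `t` of the class `i` (via choice). -/
noncomputable def decd (d m : ℕ) (i : Fin (3 ^ (d - 1))) (t : ℕ) : ℕ :=
  if h : ∃ u : Fin d → Fin m, enc u = i then resd h.choose t else 0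

lemma decd_enc {d m : ℕ} (u : Fin d → Fin m) (t : ℕ) (ht : t < d - 1) :
    decd d m (enc u) t = resd u t := by
  have h : ∃ v : Fin d → Fin m, enc v = enc u := ⟨u, rfl⟩
  rw [decd, dif_pos h]
  exact resd_eq _ _ h.choose_spec t ht

/-- The per-coordinate shift: 1 if `u`'s residue is "other class's residue + 1". -/
noncomputable def shf (d m : ℕ) (i j : Fin (3 ^ (d - 1))) (u : Fin d → Fin m) (t : ℕ) : ℤ :=
  if resd u t = (decd d m i t + 1) % 3 ∨ resd u t = (decd d m j t + 1) % 3 then 1 else 0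

lemma shf_cases (d m : ℕ) (i j : Fin (3 ^ (d - 1))) (u : Fin d → Fin m) (t : ℕ) :
    shf d m i j u t = 0 ∨ shf d m i j u t = 1 := by
  unfold shf; split
  · right; rfl
  · left; rfl

lemma shf_congr {d m : ℕ} (i j : Fin (3 ^ (d - 1))) (u v : Fin d → Fin m)
    (h : enc u = enc v) (t : ℕ) (ht : t < d - 1) :
    shf d m i j u t = shf d m i j v t := by
  unfold shf; rw [resd_eq u v h t ht]

/-- Block key: digit encoding of shifted coordinates 1..d-1 in base m+1. -/
noncomputable def bk (d m : ℕ) (i j : Fin (3 ^ (d - 1))) (u : Fin d → Fin m) : ℤ :=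
  ∑ t ∈ range (d-1), ((co u (t+1) : ℤ) - shf d m i j u t + 1) * ((m : ℤ) + 1) ^ t

def x0 {d m : ℕ} (u : Fin d → Fin m) : ℤ := (co u 0 : ℤ)

lemma x0_spec {d m : ℕ} (u : Fin d → Fin m) (h : 0 < d) : x0 u = ((u ⟨0, h⟩ : ℕ) : ℤ) := by
  unfold x0 co; rw [dif_pos h]

noncomputable def tie {d m : ℕ} (i : Fin (3 ^ (d - 1))) (u : Fin d → Fin m) : ℤ :=
  if enc u = i then 0 else 1

lemma tie_eq_zero {d m : ℕ} {i : Fin (3 ^ (d - 1))} {u : Fin d → Fin m}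
    (h : enc u = i) : tie i u = 0 := by unfold tie; rw [if_pos h]

lemma tie_eq_one {d m : ℕ} {i j : Fin (3 ^ (d - 1))} {u : Fin d → Fin m}
    (h : enc u = j) (hne : j ≠ i) : tie i u = 1 := by
  unfold tie; rw [if_neg (by rw [h]; exact hne)]

/-- The order on `V_i ∪ V_j`: lex on (block key, coordinate 0, tie). -/
noncomputable def myLe (d m : ℕ) (i j : Fin (3 ^ (d - 1))) (u v : Fin d → Fin m) : Prop :=
  bk d m i j u < bk d m i j v ∨ (bk d m i j u = bk d m i j v ∧
    (x0 u < x0 v ∨ (x0 u = x0 v ∧ tie i u ≤ tie i v)))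

lemma myLe_bk {d m : ℕ} {i j : Fin (3 ^ (d - 1))} {u v : Fin d → Fin m}
    (h : myLe d m i j u v) : bk d m i j u ≤ bk d m i j v := by
  unfold myLe at h; omega

/-- Pure arithmetic core of the shift alignment. -/
lemma shf_core (X Y a b : ℕ) (h1 : a ≤ b + 1) (h2 : b ≤ a + 1)
    (hXY : (X % 3 = a % 3 ∧ Y % 3 = b % 3) ∨ (X % 3 = b % 3 ∧ Y % 3 = a % 3)) :
    ((a : ℤ) - if a % 3 = (X + 1) % 3 ∨ a % 3 = (Y + 1) % 3 then 1 else 0)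
      = ((b : ℤ) - if b % 3 = (X + 1) % 3 ∨ b % 3 = (Y + 1) % 3 then 1 else 0) := by
  split_ifs <;> omega

lemma adj_digit_eq {d m : ℕ} (i j : Fin (3 ^ (d - 1))) (u w : Fin d → Fin m)
    (hu : enc u = i ∨ enc u = j) (hw : enc w = i ∨ enc w = j)
    (hco : ∀ s, (u s : ℕ) ≤ (w s : ℕ) + 1 ∧ (w s : ℕ) ≤ (u s : ℕ) + 1)
    (t : ℕ) (ht : t < d - 1) :
    (co u (t+1) : ℤ) - shf d m i j u t = (co w (t+1) : ℤ) - shf d m i j w t := by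
  have hd1 : t + 1 < d := by omega
  have hab1 : co u (t+1) ≤ co w (t+1) + 1 := by
    unfold co; rw [dif_pos hd1, dif_pos hd1]; exact (hco _).1
  have hab2 : co w (t+1) ≤ co u (t+1) + 1 := by
    unfold co; rw [dif_pos hd1, dif_pos hd1]; exact (hco _).2
  by_cases hcc : enc u = enc w
  · have hres : resd u t = resd w t := resd_eq u w hcc t ht
    have hres' : co u (t+1) % 3 = co w (t+1) % 3 := hres
    have hco' : co u (t+1) = co w (t+1) := by omega
    have hs : shf d m i j u t = shf d m i j w t := by unfold shf; rw [hres]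
    rw [hco', hs]
  · rcases hu with hu | hu <;> rcases hw with hw | hw
    · exact absurd (hu.trans hw.symm) hcc
    · have hdu : decd d m i t = resd u t := by rw [← hu]; exact decd_enc u t ht
      have hdw : decd d m j t = resd w t := by rw [← hw]; exact decd_enc w t ht
      have hdu' : decd d m i t = co u (t+1) % 3 := hdu
      have hdw' : decd d m j t = co w (t+1) % 3 := hdw
      have hh := shf_core (decd d m i t) (decd d m j t) (co u (t+1)) (co w (t+1))
        hab1 hab2 (Or.inl ⟨by omega, by omega⟩)
      simp only [shf, resd]
      exact hh
    · have hdu : decd d m j t = resd u t := by rw [← hu]; exact decd_enc u t ht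
      have hdw : decd d m i t = resd w t := by rw [← hw]; exact decd_enc w t ht
      have hdu' : decd d m j t = co u (t+1) % 3 := hdu
      have hdw' : decd d m i t = co w (t+1) % 3 := hdw
      have hh := shf_core (decd d m i t) (decd d m j t) (co u (t+1)) (co w (t+1))
        hab1 hab2 (Or.inr ⟨by omega, by omega⟩)
      simp only [shf, resd]
      exact hh
    · exact absurd (hu.trans hw.symm) hcc

lemma bk_eq_of_adj {d m : ℕ} (i j : Fin (3 ^ (d - 1))) (u w : Fin d → Fin m)
    (hu : enc u = i ∨ enc u = j) (hw : enc w = i ∨ enc w = j)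
    (hco : ∀ s, (u s : ℕ) ≤ (w s : ℕ) + 1 ∧ (w s : ℕ) ≤ (u s : ℕ) + 1) :
    bk d m i j u = bk d m i j w := by
  unfold bk
  refine Finset.sum_congr rfl fun t htm => ?_
  have ht : t < d - 1 := Finset.mem_range.mp htm
  have h := adj_digit_eq i j u w hu hw hco t ht
  rw [show ((co u (t+1) : ℤ) - shf d m i j u t) = ((co w (t+1) : ℤ) - shf d m i j w t) from h]

lemma digit_eq_of_bk_eq {d m : ℕ} (i j : Fin (3 ^ (d - 1))) (u v : Fin d → Fin m)
    (hbk : bk d m i j u = bk d m i j v) :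
    ∀ t, t < d - 1 →
      (co u (t+1) : ℤ) - shf d m i j u t = (co v (t+1) : ℤ) - shf d m i j v t := by
  have H := digitsInj ((m : ℤ) + 1) (d-1)
      (fun t => (co u (t+1) : ℤ) - shf d m i j u t + 1)
      (fun t => (co v (t+1) : ℤ) - shf d m i j v t + 1)
      (fun t ht => by
        have h1 : co u (t+1) < m := co_lt u (t+1) (by omega)
        have h2 : co v (t+1) < m := co_lt v (t+1) (by omega)
        have s1 := shf_cases d m i j u t
        have s2 := shf_cases d m i j v t
        show (0:ℤ) ≤ (co u (t+1) : ℤ) - shf d m i j u t + 1 ∧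
            (co u (t+1) : ℤ) - shf d m i j u t + 1 < (m:ℤ) + 1 ∧
            (0:ℤ) ≤ (co v (t+1) : ℤ) - shf d m i j v t + 1 ∧
            (co v (t+1) : ℤ) - shf d m i j v t + 1 < (m:ℤ) + 1
        refine ⟨by omega, by omega, by omega, by omega⟩)
      hbk
  intro t ht
  have hh : (co u (t+1) : ℤ) - shf d m i j u t + 1
      = (co v (t+1) : ℤ) - shf d m i j v t + 1 := H t ht
  omega

lemma key_inj {d m : ℕ} (i j : Fin (3 ^ (d - 1))) (u v : Fin d → Fin m)
    (hu : enc u = i ∨ enc u = j) (hv : enc v = i ∨ enc v = j)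
    (hbk : bk d m i j u = bk d m i j v) (hx : x0 u = x0 v) (htie : tie i u = tie i v) :
    u = v := by
  have hcl : enc u = enc v := by
    by_cases h1 : enc u = i <;> by_cases h2 : enc v = i
    · exact h1.trans h2.symm
    · exfalso; rw [tie_eq_zero h1] at htie
      rcases hv with hv | hv
      · exact h2 hv
      · rw [tie_eq_one hv (fun hh => h2 (hv.trans hh))] at htie; omega
    · exfalso; rw [tie_eq_zero h2] at htie
      rcases hu with hu | hu
      · exact h1 hu
      · rw [tie_eq_one hu (fun hh => h1 (hu.trans hh))] at htie; omega
    · rcases hu with hu | hu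
      · exact absurd hu h1
      · rcases hv with hv | hv
        · exact absurd hv h2
        · exact hu.trans hv.symm
  have hcot : ∀ t, t < d - 1 → co u (t+1) = co v (t+1) := by
    intro t ht
    have hs : shf d m i j u t = shf d m i j v t := shf_congr i j u v hcl t ht
    have hdg := digit_eq_of_bk_eq i j u v hbk t ht
    omega
  funext s
  by_cases hz : (s : ℕ) = 0
  · have e1 : x0 u = ((u s : ℕ) : ℤ) := by unfold x0; rw [← hz, co_spec]
    have e2 : x0 v = ((v s : ℕ) : ℤ) := by unfold x0; rw [← hz, co_spec]
    have h3 : ((u s : ℕ) : ℤ) = ((v s : ℕ) : ℤ) := by rw [← e1, ← e2]; exact hx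
    exact Fin.ext (by exact_mod_cast h3)
  · obtain ⟨t, htv⟩ := Nat.exists_eq_succ_of_ne_zero hz
    rw [Nat.succ_eq_add_one] at htv
    have ht : t < d - 1 := by have := s.isLt; omega
    have e1 : co u (t+1) = (u s : ℕ) := by rw [← htv]; exact co_spec u s
    have e2 : co v (t+1) = (v s : ℕ) := by rw [← htv]; exact co_spec v s
    have := hcot t ht
    exact Fin.ext (by omega)

lemma strict {d m : ℕ} (i j : Fin (3 ^ (d - 1))) (p q : Fin d → Fin m)
    (hp : enc p = i ∨ enc p = j) (hq : enc q = i ∨ enc q = j)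
    (hle : myLe d m i j p q) (hbk : bk d m i j p = bk d m i j q) (hne : p ≠ q) :
    x0 p < x0 q ∨ (x0 p = x0 q ∧ tie i p < tie i q) := by
  unfold myLe at hle
  by_cases hx : x0 p = x0 q
  · by_cases ht : tie i p = tie i q
    · exact absurd (key_inj i j p q hp hq hbk hx ht) hne
    · omega
  · omega

lemma myLe_restrict {d m : ℕ} (i j a : Fin (3 ^ (d - 1))) (u v : Fin d → Fin m)
    (hu : enc u = a) (hv : enc v = a) : myLe d m i j u v ↔ myLe d m a a u v := by
  have hcl : enc u = enc v := hu.trans hv.symm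
  have hbk : bk d m i j u - bk d m i j v = bk d m a a u - bk d m a a v := by
    unfold bk
    rw [← Finset.sum_sub_distrib, ← Finset.sum_sub_distrib]
    refine Finset.sum_congr rfl fun t htm => ?_
    have ht := Finset.mem_range.mp htm
    rw [shf_congr i j u v hcl t ht, shf_congr a a u v hcl t ht]
    ring
  have h1 : tie i u = tie i v := by unfold tie; rw [hu, hv]
  have h2 : tie a u = tie a v := by unfold tie; rw [hu, hv]
  unfold myLe
  constructor <;> intro h <;> omega

lemma fullGrid_adj {d m : ℕ} (x y : Fin d → Fin m) :
    (fullGrid d m).Adj x y ↔ x ≠ y ∧ ∀ s, (x s : ℕ) ≤ (y s : ℕ) + 1 ∧ (y s : ℕ) ≤ (x s : ℕ) + 1 := by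
  rw [fullGrid, SimpleGraph.fromRel_adj]
  constructor
  · rintro ⟨h, h2 | h2⟩
    · exact ⟨h, h2⟩
    · exact ⟨h, fun s => ⟨(h2 s).2, (h2 s).1⟩⟩
  · rintro ⟨h, h2⟩; exact ⟨h, Or.inl h2⟩

lemma adj_build {d m : ℕ} (i j : Fin (3 ^ (d - 1))) (v w : Fin d → Fin m) (hvw : v ≠ w)
    (hbk : bk d m i j v = bk d m i j w) (hx1 : x0 v ≤ x0 w + 1) (hx2 : x0 w ≤ x0 v + 1) :
    (fullGrid d m).Adj v w := by
  rw [fullGrid_adj]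
  refine ⟨hvw, fun s => ?_⟩
  by_cases hz : (s : ℕ) = 0
  · have e1 : x0 v = ((v s : ℕ) : ℤ) := by unfold x0; rw [← hz, co_spec]
    have e2 : x0 w = ((w s : ℕ) : ℤ) := by unfold x0; rw [← hz, co_spec]
    rw [e1, e2] at hx1 hx2
    exact ⟨by omega, by omega⟩
  · obtain ⟨t, htv⟩ := Nat.exists_eq_succ_of_ne_zero hz
    rw [Nat.succ_eq_add_one] at htv
    have ht : t < d - 1 := by have := s.isLt; omega
    have hdig := digit_eq_of_bk_eq i j v w hbk t ht
    have s1 := shf_cases d m i j v t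
    have s2 := shf_cases d m i j w t
    have e1 : co v (t+1) = (v s : ℕ) := by rw [← htv]; exact co_spec v s
    have e2 : co w (t+1) = (w s : ℕ) := by rw [← htv]; exact co_spec w s
    exact ⟨by omega, by omega⟩

end MTG

/-- For every `d ≥ 1`, the `d`-dimensional full grid is inversion-free proper
`3^{d−1}`-mixed-thin. -/
theorem fullGrid_invFree_proper_mixed_thin (d m : ℕ) (hd : 1 ≤ d) :
    InvFreeProperMixedThin (fullGrid d m) (3 ^ (d - 1)) := by
  classical
  have h0d : 0 < d := hd
  refine ⟨MTG.enc, MTG.myLe d m, fun _ _ => False, ?_⟩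
  intro i j _
  have hME : ∀ a b : Fin d → Fin m,
      mixedEdge (fullGrid d m) (fun _ _ => False) i j a b ↔ (fullGrid d m).Adj a b := by
    intro a b; simp [mixedEdge]
  refine ⟨?_, ?_, ?_, ?_, ?_, ?_, ?_, ?_⟩
  · -- reflexivity
    intro u _; unfold MTG.myLe; omega
  · -- antisymmetry
    intro u v hu hv hle1 hle2
    unfold MTG.myLe at hle1 hle2
    exact MTG.key_inj i j u v hu hv (by omega) (by omega) (by omega)
  · -- transitivity
    intro u v w _ _ _ hle1 hle2
    unfold MTG.myLe at hle1 hle2 ⊢; omega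
  · -- totality
    intro u v _ _; unfold MTG.myLe; omega
  · -- restriction to V_i
    intro u v hu hv; exact MTG.myLe_restrict i j i u v hu hv
  · -- restriction to V_j
    intro u v hu hv; exact MTG.myLe_restrict i j j u v hu hv
  · -- condition (b)
    intro u v w hpat hle1 hne1 hle2 hne2 hadj
    rw [hME] at hadj ⊢
    obtain ⟨hneuw, hco⟩ := (MTG.fullGrid_adj u w).mp hadj
    have hx0uw1 : MTG.x0 u ≤ MTG.x0 w + 1 := by
      rw [MTG.x0_spec u h0d, MTG.x0_spec w h0d]
      have := hco ⟨0, h0d⟩; omega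
    have hx0uw2 : MTG.x0 w ≤ MTG.x0 u + 1 := by
      rw [MTG.x0_spec u h0d, MTG.x0_spec w h0d]
      have := hco ⟨0, h0d⟩; omega
    rcases hpat with ⟨hcu, hcv, hcw⟩ | ⟨hcu, hcv, hcw⟩
    · have hmu : MTG.enc u = i ∨ MTG.enc u = j := Or.inl hcu
      have hmv : MTG.enc v = i ∨ MTG.enc v = j := Or.inl hcv
      have hmw : MTG.enc w = i ∨ MTG.enc w = j := Or.inr hcw
      have hbkuw : MTG.bk d m i j u = MTG.bk d m i j w := MTG.bk_eq_of_adj i j u w hmu hmw hco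
      have hb1 := MTG.myLe_bk hle1
      have hb2 := MTG.myLe_bk hle2
      have hbkuv : MTG.bk d m i j u = MTG.bk d m i j v := by omega
      have hbkvw : MTG.bk d m i j v = MTG.bk d m i j w := by omega
      have hs1 := MTG.strict i j u v hmu hmv hle1 hbkuv hne1
      by_cases hij2 : i = j
      · subst hij2
        exfalso
        have hs2 := MTG.strict i i v w hmv hmw hle2 hbkvw hne2
        have t1 := MTG.tie_eq_zero hcu
        have t2 := MTG.tie_eq_zero hcv
        have t3 := MTG.tie_eq_zero hcw
        omega
      · have t1 := MTG.tie_eq_zero hcu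
        have t2 := MTG.tie_eq_zero hcv
        have hx1 : MTG.x0 u < MTG.x0 v := by omega
        have hx2 : MTG.x0 v ≤ MTG.x0 w := by unfold MTG.myLe at hle2; omega
        exact MTG.adj_build i j v w hne2 hbkvw (by omega) (by omega)
    · have hmu : MTG.enc u = i ∨ MTG.enc u = j := Or.inr hcu
      have hmv : MTG.enc v = i ∨ MTG.enc v = j := Or.inr hcv
      have hmw : MTG.enc w = i ∨ MTG.enc w = j := Or.inl hcw
      have hbkuw : MTG.bk d m i j u = MTG.bk d m i j w := MTG.bk_eq_of_adj i j u w hmu hmw hco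
      have hb1 := MTG.myLe_bk hle1
      have hb2 := MTG.myLe_bk hle2
      have hbkuv : MTG.bk d m i j u = MTG.bk d m i j v := by omega
      have hbkvw : MTG.bk d m i j v = MTG.bk d m i j w := by omega
      have hs1 := MTG.strict i j u v hmu hmv hle1 hbkuv hne1
      by_cases hij2 : i = j
      · subst hij2
        exfalso
        have hs2 := MTG.strict i i v w hmv hmw hle2 hbkvw hne2
        have t1 := MTG.tie_eq_zero hcu
        have t2 := MTG.tie_eq_zero hcv
        have t3 := MTG.tie_eq_zero hcw
        omega
      · exfalso
        have hji : j ≠ i := fun hh => hij2 hh.symm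
        have t1 := MTG.tie_eq_one hcu hji
        have t2 := MTG.tie_eq_one hcv hji
        have t3 := MTG.tie_eq_zero hcw
        have hx1 : MTG.x0 u < MTG.x0 v := by omega
        have hx2 : MTG.x0 v < MTG.x0 w := by unfold MTG.myLe at hle2; omega
        omega
  · -- condition (c)
    intro u v w hpat hle1 hne1 hle2 hne2 hadj
    rw [hME] at hadj ⊢
    obtain ⟨hneuw, hco⟩ := (MTG.fullGrid_adj u w).mp hadj
    have hx0uw1 : MTG.x0 u ≤ MTG.x0 w + 1 := by
      rw [MTG.x0_spec u h0d, MTG.x0_spec w h0d]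
      have := hco ⟨0, h0d⟩; omega
    have hx0uw2 : MTG.x0 w ≤ MTG.x0 u + 1 := by
      rw [MTG.x0_spec u h0d, MTG.x0_spec w h0d]
      have := hco ⟨0, h0d⟩; omega
    rcases hpat with ⟨hcv, hcw, hcu⟩ | ⟨hcv, hcw, hcu⟩
    · have hmu : MTG.enc u = i ∨ MTG.enc u = j := Or.inr hcu
      have hmv : MTG.enc v = i ∨ MTG.enc v = j := Or.inl hcv
      have hmw : MTG.enc w = i ∨ MTG.enc w = j := Or.inl hcw
      have hbkuw : MTG.bk d m i j u = MTG.bk d m i j w := MTG.bk_eq_of_adj i j u w hmu hmw hco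
      have hb1 := MTG.myLe_bk hle1
      have hb2 := MTG.myLe_bk hle2
      have hbkuv : MTG.bk d m i j u = MTG.bk d m i j v := by omega
      have hbkvw : MTG.bk d m i j v = MTG.bk d m i j w := by omega
      exfalso
      have hs2 := MTG.strict i j v w hmv hmw hle2 hbkvw hne2
      by_cases hij2 : i = j
      · subst hij2
        have hs1 := MTG.strict i i u v hmu hmv hle1 hbkuv hne1
        have t1 := MTG.tie_eq_zero hcu
        have t2 := MTG.tie_eq_zero hcv
        have t3 := MTG.tie_eq_zero hcw
        omega
      · have hji : j ≠ i := fun hh => hij2 hh.symm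
        have t1 := MTG.tie_eq_one hcu hji
        have t2 := MTG.tie_eq_zero hcv
        have t3 := MTG.tie_eq_zero hcw
        have hx1 : MTG.x0 u < MTG.x0 v := by unfold MTG.myLe at hle1; omega
        omega
    · have hmu : MTG.enc u = i ∨ MTG.enc u = j := Or.inl hcu
      have hmv : MTG.enc v = i ∨ MTG.enc v = j := Or.inr hcv
      have hmw : MTG.enc w = i ∨ MTG.enc w = j := Or.inr hcw
      have hbkuw : MTG.bk d m i j u = MTG.bk d m i j w := MTG.bk_eq_of_adj i j u w hmu hmw hco
      have hb1 := MTG.myLe_bk hle1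
      have hb2 := MTG.myLe_bk hle2
      have hbkuv : MTG.bk d m i j u = MTG.bk d m i j v := by omega
      have hbkvw : MTG.bk d m i j v = MTG.bk d m i j w := by omega
      have hs2 := MTG.strict i j v w hmv hmw hle2 hbkvw hne2
      by_cases hij2 : i = j
      · subst hij2
        exfalso
        have hs1 := MTG.strict i i u v hmu hmv hle1 hbkuv hne1
        have t1 := MTG.tie_eq_zero hcu
        have t2 := MTG.tie_eq_zero hcv
        have t3 := MTG.tie_eq_zero hcw
        omega
      · have hji : j ≠ i := fun hh => hij2 hh.symm
        have t1 := MTG.tie_eq_zero hcu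
        have t2 := MTG.tie_eq_one hcv hji
        have t3 := MTG.tie_eq_one hcw hji
        have hx1 : MTG.x0 u ≤ MTG.x0 v := by unfold MTG.myLe at hle1; omega
        have hx2 : MTG.x0 v < MTG.x0 w := by omega
        exact MTG.adj_build i j u v hne1 hbkuv (by omega) (by omega)
end

section
/- Let P₀ = (V, ⪯₀) be a poset that is a disjoint union of k chains V₁,…,V_k. Let X ⊇ V and suppose each x ∈ X \ V is assigned a 'connector': a pair (l_x, u_x) with l_x ∈ V_i and u_x ∈ V_j for some i ≤ j (and l_x strictly below u_x in the chain when i = j). Define ⊑ as the union over x of the relations {(l_x, x), (x, u_x)}, together with the relations x ⊑_{ij} y for distinct connector centres x, y with joins to the same pair (V_i, V_j), whenever l_x < l_y in V_i and u_x < u_y in V_j. Then the reflexive–transitive closure ⪯₁ of ⪯₀ ∪ ⊑ is a partial order on X. -/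
/-- The one-step relation generating `⪯₁`: the chain orders `⪯₀`, the joins
`l_x ⊑ x ⊑ u_x` of the connectors, and the ordering `⊑_{ij}` of connector centres with
joins to the same pair of chains (`x ⊑_{ij} y` iff `l_x < l_y` and `u_x < u_y`). -/
def connectorStep {X : Type*} {k : ℕ} (V : Set X) (c : X → Fin k)
    (r0 : X → X → Prop) (l u : X → X) : X → X → Prop := fun x y =>
  r0 x y ∨ (y ∉ V ∧ x = l y) ∨ (x ∉ V ∧ y = u x) ∨
  (x ∉ V ∧ y ∉ V ∧ x ≠ y ∧ c (l x) = c (l y) ∧ c (u x) = c (u y) ∧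
    (r0 (l x) (l y) ∧ l x ≠ l y) ∧ (r0 (u x) (u y) ∧ u x ≠ u y))

/-- Claim 1 of the paper: the reflexive–transitive closure `⪯₁` of `⪯₀ ∪ ⊑` is a
partial order on `X`. -/
theorem connector_closure_partialOrder {X : Type*} {k : ℕ} (V : Set X) (c : X → Fin k)
    (r0 : X → X → Prop) (l u : X → X)
    -- `⪯₀` (i.e. `r0`) is a partial order on `V` which is a disjoint union of the
    -- `k` chains `V₁,…,V_k` (given by the chain-assignment `c`):
    (hr0mem : ∀ x y, r0 x y → x ∈ V ∧ y ∈ V ∧ c x = c y)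
    (hr0refl : ∀ x ∈ V, r0 x x)
    (hr0antisymm : ∀ x y, r0 x y → r0 y x → x = y)
    (hr0trans : ∀ x y z, r0 x y → r0 y z → r0 x z)
    (hr0total : ∀ x ∈ V, ∀ y ∈ V, c x = c y → r0 x y ∨ r0 y x)
    -- every `x ∈ X \ V` is the centre of a connector with joins `l x ∈ V_i`,
    -- `u x ∈ V_j`, `i ≤ j`, and `l x` strictly below `u x` when `i = j`:
    (hl : ∀ x, x ∉ V → l x ∈ V) (hu : ∀ x, x ∉ V → u x ∈ V)
    (hij : ∀ x, x ∉ V → c (l x) ≤ c (u x))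
    (hsame : ∀ x, x ∉ V → c (l x) = c (u x) → r0 (l x) (u x) ∧ l x ≠ u x)
    :
    IsPartialOrder X (Relation.ReflTransGen (connectorStep V c r0 l u)) := by
  classical
  -- lower and upper endpoints of the "interval" of an element
  set L : X → X := fun x => if x ∈ V then x else l x with hLdef
  set U : X → X := fun x => if x ∈ V then x else u x with hUdef
  -- a strict order on `V` extending the chain orders across different chains
  set lt' : X → X → Prop :=
    fun a b => c a < c b ∨ (c a = c b ∧ r0 a b ∧ a ≠ b) with hltdef
  have ltirr : ∀ a, ¬ lt' a a := by
    intro a h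
    rcases h with h | ⟨_, _, h⟩
    · exact lt_irrefl _ h
    · exact h rfl
  have lttrans : ∀ a b d, lt' a b → lt' b d → lt' a d := by
    intro a b d hab hbd
    rcases hab with h1 | ⟨e1, r1, n1⟩ <;> rcases hbd with h2 | ⟨e2, r2, n2⟩
    · exact Or.inl (h1.trans h2)
    · exact Or.inl (e2 ▸ h1)
    · exact Or.inl (e1 ▸ h2)
    · refine Or.inr ⟨e1.trans e2, hr0trans _ _ _ r1 r2, ?_⟩
      rintro rfl
      exact n1 (hr0antisymm _ _ r1 r2)
  -- strictly-lower endpoint across a connector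
  have hlu : ∀ x, x ∉ V → lt' (l x) (u x) := by
    intro x hx
    rcases lt_or_eq_of_le (hij x hx) with h | h
    · exact Or.inl h
    · exact Or.inr ⟨h, (hsame x hx h).1, (hsame x hx h).2⟩
  -- the "progress" relation: intervals weakly move right, strictly in one endpoint
  set T : X → X → Prop := fun a b =>
    (L a = L b ∨ lt' (L a) (L b)) ∧ (U a = U b ∨ lt' (U a) (U b)) ∧
      (lt' (L a) (L b) ∨ lt' (U a) (U b)) with hTdef
  have Ttrans : ∀ a b d, T a b → T b d → T a d := by
    intro a b d ⟨hL1, hU1, hS1⟩ ⟨hL2, hU2, hS2⟩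
    have hL3 : L a = L d ∨ lt' (L a) (L d) := by
      rcases hL1 with h | h <;> rcases hL2 with h' | h'
      · exact Or.inl (h.trans h')
      · exact Or.inr (h ▸ h')
      · exact Or.inr (h' ▸ h)
      · exact Or.inr (lttrans _ _ _ h h')
    have hU3 : U a = U d ∨ lt' (U a) (U d) := by
      rcases hU1 with h | h <;> rcases hU2 with h' | h'
      · exact Or.inl (h.trans h')
      · exact Or.inr (h ▸ h')
      · exact Or.inr (h' ▸ h)
      · exact Or.inr (lttrans _ _ _ h h')
    refine ⟨hL3, hU3, ?_⟩
    rcases hS1 with h | h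
    · left
      rcases hL2 with h' | h'
      · exact h' ▸ h
      · exact lttrans _ _ _ h h'
    · right
      rcases hU2 with h' | h'
      · exact h' ▸ h
      · exact lttrans _ _ _ h h'
  have step_T : ∀ a b, connectorStep V c r0 l u a b → a ≠ b → T a b := by
    intro a b hs hne
    rcases hs with h | ⟨hb, rfl⟩ | ⟨ha, rfl⟩ | ⟨ha, hb, hne', hcl, hcu, ⟨rl, nl⟩, ⟨ru, nu⟩⟩
    · obtain ⟨haV, hbV, hc⟩ := hr0mem _ _ h
      have hLa : L a = a := if_pos haV
      have hLb : L b = b := if_pos hbV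
      have hUa : U a = a := if_pos haV
      have hUb : U b = b := if_pos hbV
      have : lt' a b := Or.inr ⟨hc, h, hne⟩
      show (L a = L b ∨ lt' (L a) (L b)) ∧ (U a = U b ∨ lt' (U a) (U b)) ∧
        (lt' (L a) (L b) ∨ lt' (U a) (U b))
      rw [hLa, hLb, hUa, hUb]
      exact ⟨Or.inr this, Or.inr this, Or.inl this⟩
    · -- a = l b, b ∉ V
      have haV : l b ∈ V := hl b hb
      show (L (l b) = L b ∨ lt' (L (l b)) (L b)) ∧ (U (l b) = U b ∨ lt' (U (l b)) (U b)) ∧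
        (lt' (L (l b)) (L b) ∨ lt' (U (l b)) (U b))
      rw [show L (l b) = l b from if_pos haV, show U (l b) = l b from if_pos haV,
        show L b = l b from if_neg hb, show U b = u b from if_neg hb]
      exact ⟨Or.inl rfl, Or.inr (hlu b hb), Or.inr (hlu b hb)⟩
    · -- b = u a, a ∉ V
      have hbV : u a ∈ V := hu a ha
      show (L a = L (u a) ∨ lt' (L a) (L (u a))) ∧ (U a = U (u a) ∨ lt' (U a) (U (u a))) ∧
        (lt' (L a) (L (u a)) ∨ lt' (U a) (U (u a)))
      rw [show L a = l a from if_neg ha, show U a = u a from if_neg ha,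
        show L (u a) = u a from if_pos hbV, show U (u a) = u a from if_pos hbV]
      exact ⟨Or.inr (hlu a ha), Or.inl rfl, Or.inl (hlu a ha)⟩
    · -- both centres
      show (L a = L b ∨ lt' (L a) (L b)) ∧ (U a = U b ∨ lt' (U a) (U b)) ∧
        (lt' (L a) (L b) ∨ lt' (U a) (U b))
      rw [show L a = l a from if_neg ha, show U a = u a from if_neg ha,
        show L b = l b from if_neg hb, show U b = u b from if_neg hb]
      have h1 : lt' (l a) (l b) := Or.inr ⟨hcl, rl, nl⟩
      have h2 : lt' (u a) (u b) := Or.inr ⟨hcu, ru, nu⟩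
      exact ⟨Or.inr h1, Or.inr h2, Or.inl h1⟩
  have closure_T : ∀ a b, Relation.ReflTransGen (connectorStep V c r0 l u) a b →
      a = b ∨ T a b := by
    intro a b h
    induction h with
    | refl => exact Or.inl rfl
    | @tail y z hab hbd ih =>
      by_cases hyz : y = z
      · exact hyz ▸ ih
      · rcases ih with rfl | hT
        · exact Or.inr (step_T _ _ hbd hyz)
        · exact Or.inr (Ttrans _ _ _ hT (step_T _ _ hbd hyz))
  letI : IsRefl X (Relation.ReflTransGen (connectorStep V c r0 l u)) :=
    ⟨fun _ => Relation.ReflTransGen.refl⟩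
  letI : IsTrans X (Relation.ReflTransGen (connectorStep V c r0 l u)) :=
    ⟨fun _ _ _ hab hbd => hab.trans hbd⟩
  letI : IsPreorder X (Relation.ReflTransGen (connectorStep V c r0 l u)) := ⟨⟩
  letI : IsAntisymm X (Relation.ReflTransGen (connectorStep V c r0 l u)) := ⟨?_⟩
  · exact ⟨⟩
  intro a b hab hba
  by_contra hne
  rcases closure_T _ _ hab with rfl | hT1
  · exact hne rfl
  rcases closure_T _ _ hba with h | hT2
  · exact hne h.symm
  obtain ⟨_, _, hS⟩ := Ttrans _ _ _ hT1 hT2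
  rcases hS with h | h
  · exact ltirr _ h
  · exact ltirr _ h
end

section
/- In the poset P₁ = (X, ⪯₁) of the previous construction, every join of every connector is a cover pair: for each connector centre x ∈ X \ V with joins l_x and u_x, there is no z ∈ X with l_x ≺₁ z ≺₁ x, and no z ∈ X with x ≺₁ z ≺₁ u_x. -/
open Classical in
/-- Lower join projection. -/
noncomputable def lowerJ {X : Type*} (V : Set X) (l : X → X) (a : X) : X :=
  if a ∈ V then a else l a

open Classical in
/-- Upper join projection. -/
noncomputable def upperJ {X : Type*} (V : Set X) (u : X → X) (a : X) : X :=
  if a ∈ V then a else u a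

section Aux

variable {X : Type*} {k : ℕ} (V : Set X) (c : X → Fin k)
    (r0 : X → X → Prop) (l u : X → X)
    (hr0mem : ∀ x y, r0 x y → x ∈ V ∧ y ∈ V ∧ c x = c y)
    (hr0refl : ∀ x ∈ V, r0 x x)
    (hr0antisymm : ∀ x y, r0 x y → r0 y x → x = y)
    (hr0trans : ∀ x y z, r0 x y → r0 y z → r0 x z)
    (hl : ∀ x, x ∉ V → l x ∈ V) (hu : ∀ x, x ∉ V → u x ∈ V)
    (hij : ∀ x, x ∉ V → c (l x) ≤ c (u x))
    (hsame : ∀ x, x ∉ V → c (l x) = c (u x) → r0 (l x) (u x) ∧ l x ≠ u x)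

local notation "L" => lowerJ V l
local notation "U" => upperJ V u

lemma lowerJ_mem {a : X} (h : a ∈ V) : L a = a := if_pos h
lemma lowerJ_not_mem {a : X} (h : a ∉ V) : L a = l a := if_neg h
lemma upperJ_mem {a : X} (h : a ∈ V) : U a = a := if_pos h
lemma upperJ_not_mem {a : X} (h : a ∉ V) : U a = u a := if_neg h

include hl in
lemma lowerJ_in_V (a : X) : L a ∈ V := by
  by_cases h : a ∈ V
  · rw [lowerJ_mem V l h]; exact h
  · rw [lowerJ_not_mem V l h]; exact hl a h

include hu in
lemma upperJ_in_V (a : X) : U a ∈ V := by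
  by_cases h : a ∈ V
  · rw [upperJ_mem V u h]; exact h
  · rw [upperJ_not_mem V u h]; exact hu a h

include hr0mem hr0refl hij hsame hl hu in
/-- The invariant for a single step. -/
lemma step_inv {b b' : X} (h : connectorStep V c r0 l u b b') :
    c (L b) ≤ c (L b') ∧ c (U b) ≤ c (U b') ∧
    (c (L b) = c (L b') → r0 (L b) (L b')) ∧
    (c (U b) = c (U b') → r0 (U b) (U b')) ∧
    (c (L b) = c (L b') → c (U b) = c (U b') → b ≠ b' → L b ≠ L b' ∨ U b ≠ U b') := by
  rcases h with h | ⟨hb', hbe⟩ | ⟨hb, hbe⟩ | ⟨hb, hb', hne, hcl, hcu, ⟨hrl, hlne⟩, hru, hune⟩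
  · obtain ⟨hbV, hb'V, hcb⟩ := hr0mem _ _ h
    rw [lowerJ_mem V l hbV, lowerJ_mem V l hb'V, upperJ_mem V u hbV,
      upperJ_mem V u hb'V]
    exact ⟨le_of_eq hcb, le_of_eq hcb, fun _ => h, fun _ => h,
      fun _ _ hne => Or.inl hne⟩
  · -- b = l b', b' ∉ V
    have hbV : b ∈ V := hbe ▸ hl b' hb'
    rw [lowerJ_mem V l hbV, lowerJ_not_mem V l hb', upperJ_mem V u hbV,
      upperJ_not_mem V u hb', hbe]
    refine ⟨le_of_eq rfl, hij b' hb', fun _ => hr0refl _ (hl b' hb'),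
      fun hc => (hsame b' hb' hc).1, fun _ hc _ => Or.inr (hsame b' hb' hc).2⟩
  · -- b' = u b, b ∉ V
    have hb'V : b' ∈ V := hbe ▸ hu b hb
    rw [lowerJ_not_mem V l hb, lowerJ_mem V l hb'V, upperJ_not_mem V u hb,
      upperJ_mem V u hb'V, hbe]
    refine ⟨hij b hb, le_of_eq rfl, fun hc => (hsame b hb hc).1,
      fun _ => hr0refl _ (hu b hb), fun hc _ _ => Or.inl (hsame b hb hc).2⟩
  · rw [lowerJ_not_mem V l hb, lowerJ_not_mem V l hb', upperJ_not_mem V u hb,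
      upperJ_not_mem V u hb']
    exact ⟨le_of_eq hcl, le_of_eq hcu, fun _ => hrl, fun _ => hru,
      fun _ _ _ => Or.inl hlne⟩

include hr0mem hr0refl hr0antisymm hr0trans hij hsame hl hu in
/-- The invariant along the reflexive–transitive closure. -/
lemma rtg_inv {a b : X} (h : Relation.ReflTransGen (connectorStep V c r0 l u) a b) :
    c (L a) ≤ c (L b) ∧ c (U a) ≤ c (U b) ∧
    (c (L a) = c (L b) → r0 (L a) (L b)) ∧
    (c (U a) = c (U b) → r0 (U a) (U b)) ∧
    (c (L a) = c (L b) → c (U a) = c (U b) → a ≠ b → L a ≠ L b ∨ U a ≠ U b) := by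
  induction h with
  | refl =>
      exact ⟨le_rfl, le_rfl, fun _ => hr0refl _ (lowerJ_in_V V l hl a),
        fun _ => hr0refl _ (upperJ_in_V V u hu a), fun _ _ hne => absurd rfl hne⟩
  | @tail b b' hab hbb' ih =>
      obtain ⟨sL, sU, sRL, sRU, sS⟩ :=
        step_inv V c r0 l u hr0mem hr0refl hl hu hij hsame hbb'
      obtain ⟨iL, iU, iRL, iRU, iS⟩ := ih
      refine ⟨le_trans iL sL, le_trans iU sU, ?_, ?_, ?_⟩
      · intro hc
        have h1 : c (L a) = c (L b) := le_antisymm iL (hc ▸ sL)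
        have h2 : c (L b) = c (L b') := le_antisymm sL (h1 ▸ le_of_eq hc.symm)
        exact hr0trans _ _ _ (iRL h1) (sRL h2)
      · intro hc
        have h1 : c (U a) = c (U b) := le_antisymm iU (hc ▸ sU)
        have h2 : c (U b) = c (U b') := le_antisymm sU (h1 ▸ le_of_eq hc.symm)
        exact hr0trans _ _ _ (iRU h1) (sRU h2)
      · intro hcL hcU hne
        have h1 : c (L a) = c (L b) := le_antisymm iL (hcL ▸ sL)
        have h2 : c (L b) = c (L b') := le_antisymm sL (h1 ▸ le_of_eq hcL.symm)
        have h3 : c (U a) = c (U b) := le_antisymm iU (hcU ▸ sU)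
        have h4 : c (U b) = c (U b') := le_antisymm sU (h3 ▸ le_of_eq hcU.symm)
        by_contra hcon
        push_neg at hcon
        obtain ⟨eL, eU⟩ := hcon
        -- from eL : L a = L b', eU : U a = U b'
        have hLab : L a = L b :=
          hr0antisymm _ _ (iRL h1) (eL ▸ sRL h2)
        have hUab : U a = U b :=
          hr0antisymm _ _ (iRU h3) (eU ▸ sRU h4)
        by_cases hab' : a = b
        · subst hab'
          rcases sS h2 h4 hne with h | h
          · exact h eL
          · exact h eU
        · rcases iS h1 h3 hab' with h | h
          · exact h hLab
          · exact h hUab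

include hr0mem hr0refl hr0antisymm hr0trans hij hsame hl hu in
/-- `⪯₁` is antisymmetric. -/
lemma rtg_antisymm {a b : X}
    (h1 : Relation.ReflTransGen (connectorStep V c r0 l u) a b)
    (h2 : Relation.ReflTransGen (connectorStep V c r0 l u) b a) : a = b := by
  by_contra hne
  obtain ⟨iL, iU, iRL, iRU, iS⟩ :=
    rtg_inv V c r0 l u hr0mem hr0refl hr0antisymm hr0trans hl hu hij hsame h1
  obtain ⟨jL, jU, jRL, jRU, _⟩ :=
    rtg_inv V c r0 l u hr0mem hr0refl hr0antisymm hr0trans hl hu hij hsame h2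
  have hcL : c (L a) = c (L b) := le_antisymm iL jL
  have hcU : c (U a) = c (U b) := le_antisymm iU jU
  rcases iS hcL hcU hne with h | h
  · exact h (hr0antisymm _ _ (iRL hcL) (jRL hcL.symm))
  · exact h (hr0antisymm _ _ (iRU hcU) (jRU hcU.symm))

end Aux

/-- In the poset `P₁ = (X, ⪯₁)` (the reflexive–transitive closure of `⪯₀ ∪ ⊑`), every
join of every connector is a cover pair: for each connector centre `x ∈ X \ V`, no
element lies strictly between `l_x` and `x`, and none lies strictly between `x` and
`u_x`. -/
theorem connector_joins_are_covers {X : Type*} {k : ℕ} (V : Set X) (c : X → Fin k)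
    (r0 : X → X → Prop) (l u : X → X)
    -- `⪯₀` (i.e. `r0`) is a partial order on `V` which is a disjoint union of the
    -- `k` chains `V₁,…,V_k` (given by the chain-assignment `c`):
    (hr0mem : ∀ x y, r0 x y → x ∈ V ∧ y ∈ V ∧ c x = c y)
    (hr0refl : ∀ x ∈ V, r0 x x)
    (hr0antisymm : ∀ x y, r0 x y → r0 y x → x = y)
    (hr0trans : ∀ x y z, r0 x y → r0 y z → r0 x z)
    (hr0total : ∀ x ∈ V, ∀ y ∈ V, c x = c y → r0 x y ∨ r0 y x)
    -- every `x ∈ X \ V` is the centre of a connector with joins `l x ∈ V_i`,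
    -- `u x ∈ V_j`, `i ≤ j`, and `l x` strictly below `u x` when `i = j`:
    (hl : ∀ x, x ∉ V → l x ∈ V) (hu : ∀ x, x ∉ V → u x ∈ V)
    (hij : ∀ x, x ∉ V → c (l x) ≤ c (u x))
    (hsame : ∀ x, x ∉ V → c (l x) = c (u x) → r0 (l x) (u x) ∧ l x ≠ u x)
    :
    ∀ x, x ∉ V →
      (¬ ∃ z : X, (Relation.ReflTransGen (connectorStep V c r0 l u) (l x) z ∧ l x ≠ z) ∧
        (Relation.ReflTransGen (connectorStep V c r0 l u) z x ∧ z ≠ x)) ∧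
      (¬ ∃ z : X, (Relation.ReflTransGen (connectorStep V c r0 l u) x z ∧ x ≠ z) ∧
        (Relation.ReflTransGen (connectorStep V c r0 l u) z (u x) ∧ z ≠ u x)) := by
  intro x hx
  have antisymm := fun {a b : X} =>
    rtg_antisymm V c r0 l u hr0mem hr0refl hr0antisymm hr0trans hl hu hij hsame (a := a) (b := b)
  constructor
  · rintro ⟨z, ⟨hlz, hlzne⟩, hzx, hzxne⟩
    rcases hzx.cases_tail with h | ⟨w, hzw, hwx⟩
    · exact hzxne h.symm
    rcases hwx with h | ⟨_, hwe⟩ | ⟨hw, hxe⟩ | ⟨hw, _, _, hcl, hcu, ⟨hrl, hlne⟩, _⟩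
    · exact hx (hr0mem _ _ h).2.1
    · -- w = l x : antisymmetry between z and l x
      exact hlzne (antisymm hlz (hwe ▸ hzw))
    · exact hx (hxe ▸ hu w hw)
    · -- w ⊑ x : l x ⪯ w, and r0 (l w) (l x) with l w ≠ l x
      have hlw : Relation.ReflTransGen (connectorStep V c r0 l u) (l x) w :=
        hlz.trans hzw
      obtain ⟨_, _, iRL, _, _⟩ :=
        rtg_inv V c r0 l u hr0mem hr0refl hr0antisymm hr0trans hl hu hij hsame hlw
      rw [lowerJ_mem V l (hl x hx), lowerJ_not_mem V l hw] at iRL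
      exact hlne (hr0antisymm _ _ hrl (iRL hcl.symm))
  · rintro ⟨z, ⟨hxz, hxzne⟩, hzu, hzune⟩
    rcases hxz.cases_head with h | ⟨a, hxa, haz⟩
    · exact hxzne h
    rcases hxa with h | ⟨ha, hxe⟩ | ⟨_, hae⟩ | ⟨_, ha, _, hcl, hcu, _, hru, hune⟩
    · exact hx (hr0mem _ _ h).1
    · exact hx (hxe ▸ hl a ha)
    · -- a = u x : antisymmetry between z and u x
      exact hzune (antisymm hzu (hae ▸ haz))
    · -- x ⊑ a : a ⪯ u x, and r0 (u x) (u a) with u x ≠ u a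
      have hau : Relation.ReflTransGen (connectorStep V c r0 l u) a (u x) :=
        haz.trans hzu
      obtain ⟨_, _, _, iRU, _⟩ :=
        rtg_inv V c r0 l u hr0mem hr0refl hr0antisymm hr0trans hl hu hij hsame hau
      rw [upperJ_not_mem V u ha, upperJ_mem V u (hu x hx)] at iRU
      exact hune (hr0antisymm _ _ hru (iRU hcu.symm))
end

section
/- Let P = (X, ⪯) be a finite poset of width k, partitioned into k chains C₁,…,C_k by Dilworth's theorem, and let h = max_i |C_i|. Construct the graph G with vertex set V = {a_v, b_v : v ∈ X} ∪ {o₁,…,o_h}, and edges: {o_m, a_v} and {o_m, b_v} for v ∈ C_i iff m ≤ |{u ∈ C_i : u ⪯ v}|; and {a_u, b_v} for u ∈ C_i, v ∈ C_j with i ≠ j iff u ⪯ v; and no other edges. Then for all u, v ∈ X lying in distinct chains, u ⪯ v holds if and only if {a_u, b_v} ∈ E(G), and for u, v in the same chain C_i, u ⪯ v holds if and only if every o_m adjacent to a_u is adjacent to a_v. -/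
/-- The number of elements of the chain of `v` that are `≤ v` (the 1-based rank of `v`
within its chain). -/
noncomputable def chainRank {X : Type*} {k : ℕ} [PartialOrder X] (ch : X → Fin k)
    (v : X) : ℕ :=
  {u : X | ch u = ch v ∧ u ≤ v}.ncard

/-- The graph `G` of Theorem 5: vertices `a_v = inl v`, `b_v = inr (inl v)` for `v ∈ X`
and `o_m = inr (inr m)`; edges `{o_m, a_v}` and `{o_m, b_v}` iff `m ≤ |{u ∈ C_i : u ⪯ v}|`
(where `v ∈ C_i` and `m` is 1-based, i.e. `m+1` for `m : Fin h`), and `{a_u, b_v}` for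
`u, v` in distinct chains iff `u ⪯ v`; and no other edges. -/
noncomputable def posetGraph {X : Type*} {k : ℕ} [PartialOrder X] (ch : X → Fin k)
    (h : ℕ) : SimpleGraph (X ⊕ X ⊕ Fin h) :=
  SimpleGraph.fromRel (fun p q =>
    match p, q with
    | Sum.inr (Sum.inr m), Sum.inl v => (m : ℕ) + 1 ≤ chainRank ch v
    | Sum.inr (Sum.inr m), Sum.inr (Sum.inl v) => (m : ℕ) + 1 ≤ chainRank ch v
    | Sum.inl u, Sum.inr (Sum.inl v) => ch u ≠ ch v ∧ u ≤ v
    | _, _ => False)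

lemma chainRank_pos {X : Type*} [Fintype X] {k : ℕ} [PartialOrder X] (ch : X → Fin k)
    (u : X) : 1 ≤ chainRank ch u := by
  have : u ∈ {w : X | ch w = ch u ∧ w ≤ u} := ⟨rfl, le_refl u⟩
  have := Set.ncard_pos (s := {w : X | ch w = ch u ∧ w ≤ u}) (Set.toFinite _)
  exact this.mpr ⟨u, ‹_›⟩

lemma chainRank_mono {X : Type*} [Fintype X] {k : ℕ} [PartialOrder X] (ch : X → Fin k)
    {u v : X} (he : ch u = ch v) (hle : u ≤ v) : chainRank ch u ≤ chainRank ch v := by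
  apply Set.ncard_le_ncard _ (Set.toFinite _)
  rintro w ⟨h1, h2⟩
  exact ⟨h1.trans he, h2.trans hle⟩

lemma chainRank_strict {X : Type*} [Fintype X] {k : ℕ} [PartialOrder X] (ch : X → Fin k)
    {u v : X} (he : ch u = ch v) (hlt : u < v) : chainRank ch u < chainRank ch v := by
  apply Set.ncard_lt_ncard _ (Set.toFinite _)
  constructor
  · rintro w ⟨h1, h2⟩; exact ⟨h1.trans he, h2.trans hlt.le⟩
  · intro hsub
    have := hsub ⟨rfl, le_refl v⟩
    exact absurd this.2 (not_le_of_gt hlt)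

/-- Correctness of the encoding of a finite poset `P = (X, ⪯)` of width `k`,
partitioned into `k` chains by `ch`, in the graph `posetGraph`: for `u, v` in distinct
chains, `u ⪯ v` iff `{a_u, b_v}` is an edge; for `u, v` in the same chain, `u ⪯ v` iff
every `o_m` adjacent to `a_u` is adjacent to `a_v`. -/
theorem posetGraph_encodes_poset {X : Type*} [Fintype X] [PartialOrder X] (k : ℕ)
    (ch : X → Fin k) (hch : ∀ u v : X, ch u = ch v → u ≤ v ∨ v ≤ u)
    (h : ℕ) (hh : h = Finset.univ.sup (fun i : Fin k => {v : X | ch v = i}.ncard)) :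
    (∀ u v : X, ch u ≠ ch v →
      (u ≤ v ↔ (posetGraph ch h).Adj (Sum.inl u) (Sum.inr (Sum.inl v)))) ∧
    (∀ u v : X, ch u = ch v →
      (u ≤ v ↔ ∀ m : Fin h,
        (posetGraph ch h).Adj (Sum.inr (Sum.inr m)) (Sum.inl u) →
        (posetGraph ch h).Adj (Sum.inr (Sum.inr m)) (Sum.inl v))) := by
  have hbound : ∀ u : X, chainRank ch u ≤ h := by
    intro u
    have h1 : chainRank ch u ≤ {v : X | ch v = ch u}.ncard := by
      apply Set.ncard_le_ncard _ (Set.toFinite _)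
      rintro w ⟨h1, _⟩; exact h1
    have h2 : {v : X | ch v = ch u}.ncard ≤ h := by
      rw [hh]
      exact Finset.le_sup (f := fun i : Fin k => {v : X | ch v = i}.ncard) (Finset.mem_univ (ch u))
    exact h1.trans h2
  constructor
  · intro u v hne
    rw [posetGraph, SimpleGraph.fromRel_adj]
    simp only []
    constructor
    · intro hle
      exact ⟨by simp, Or.inl ⟨hne, hle⟩⟩
    · rintro ⟨-, h1 | h1⟩
      · exact h1.2
      · exact absurd h1 not_false
  · intro u v he
    have adjo : ∀ (w : X) (m : Fin h),
        (posetGraph ch h).Adj (Sum.inr (Sum.inr m)) (Sum.inl w) ↔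
          (m : ℕ) + 1 ≤ chainRank ch w := by
      intro w m
      rw [posetGraph, SimpleGraph.fromRel_adj]
      constructor
      · rintro ⟨-, h1 | h1⟩
        · exact h1
        · exact absurd h1 not_false
      · intro hm
        exact ⟨by simp, Or.inl hm⟩
    constructor
    · intro hle m
      rw [adjo, adjo]
      intro hm
      exact hm.trans (chainRank_mono ch he hle)
    · intro hm
      rcases hch u v he with hle | hle
      · exact hle
      · by_contra hnle
        have hlt : v < u := lt_of_le_of_ne hle (fun e => hnle (e ▸ le_refl v))
        have hrank : chainRank ch v < chainRank ch u := chainRank_strict ch he.symm hlt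
        have h1 : 1 ≤ chainRank ch u := chainRank_pos ch u
        have hb : chainRank ch u ≤ h := hbound u
        obtain ⟨n, hn⟩ : ∃ n, chainRank ch u = n + 1 := ⟨chainRank ch u - 1, by omega⟩
        have hmlt : n < h := by omega
        have := hm ⟨n, hmlt⟩
        rw [adjo, adjo] at this
        simp only [Fin.val_mk] at this
        have := this (by omega)
        omega
end

section
/- With P, chains C₁,…,C_k, and the graph G as constructed above (vertices a_v, b_v for v ∈ X and o₁,…,o_h; edges {o_m, a_v}, {o_m, b_v} for v ∈ C_i iff m ≤ |{u ∈ C_i : u ⪯ v}|, and {a_u, b_v} for u ∈ C_i, v ∈ C_j, i ≠ j iff u ⪯ v), the partition (O, A₁,…,A_k, B₁,…,B_k) with O = {o₁,…,o_h}, A_i = {a_v : v ∈ C_i}, B_i = {b_v : v ∈ C_i}, together with the linear orders defined in the paper (chain order within each A_i and B_i, index order on O, interleavings for O versus A_i or B_i, and a_u ≤ b_v iff u ⪯ v for A_i versus B_j with i ≠ j, completed to a total order), witnesses that G is an inversion-free proper (2k+1)-mixed-thin graph. -/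
/-- The partition of the vertices of `posetGraph` into `2k+1` parts:
`O` is part `0`, `A_i` is part `i` and `B_i` is part `k + i` (for `1 ≤ i ≤ k`). -/
def posetGraphPart {X : Type*} {k : ℕ} (ch : X → Fin k) (h : ℕ) :
    (X ⊕ X ⊕ Fin h) → Fin (2 * k + 1) := fun w =>
  match w with
  | Sum.inl v => ⟨(ch v : ℕ) + 1, by have := (ch v).isLt; omega⟩
  | Sum.inr (Sum.inl v) => ⟨(ch v : ℕ) + k + 1, by have := (ch v).isLt; omega⟩
  | Sum.inr (Sum.inr _) => ⟨0, by omega⟩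


namespace PosetGraphAux

variable {X : Type*} [Fintype X] [PartialOrder X] {k : ℕ}

/-- The uniform order relation used for all the linear orders `le i j`. -/
noncomputable def theR (ch : X → Fin k) (h : ℕ) :
    (X ⊕ X ⊕ Fin h) → (X ⊕ X ⊕ Fin h) → Prop := fun p q =>
  match p, q with
  | Sum.inr (Sum.inr m), Sum.inr (Sum.inr m') => m ≤ m'
  | Sum.inr (Sum.inr m), Sum.inl v => (m : ℕ) < chainRank ch v
  | Sum.inl v, Sum.inr (Sum.inr m) => chainRank ch v ≤ (m : ℕ)
  | Sum.inr (Sum.inr m), Sum.inr (Sum.inl v) => (m : ℕ) < chainRank ch v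
  | Sum.inr (Sum.inl v), Sum.inr (Sum.inr m) => chainRank ch v ≤ (m : ℕ)
  | Sum.inl u, Sum.inl v => (ch u = ch v ∧ u ≤ v) ∨ ch v < ch u
  | Sum.inr (Sum.inl u), Sum.inr (Sum.inl v) => (ch u = ch v ∧ u ≤ v) ∨ ch v < ch u
  | Sum.inl u, Sum.inr (Sum.inl v) => ch u ≠ ch v ∧ u ≤ v
  | Sum.inr (Sum.inl v), Sum.inl u => ch u = ch v ∨ ¬ u ≤ v

lemma rank_mono (ch : X → Fin k) {u v : X} (hc : ch u = ch v) (huv : u ≤ v) :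
    chainRank ch u ≤ chainRank ch v := by
  apply Set.ncard_le_ncard _ (Set.toFinite _)
  rintro x ⟨h1, h2⟩
  exact ⟨h1.trans hc, h2.trans huv⟩

lemma rank_strict (ch : X → Fin k) {u v : X} (hc : ch u = ch v) (huv : u ≤ v)
    (hne : u ≠ v) : chainRank ch u < chainRank ch v := by
  apply Set.ncard_lt_ncard _ (Set.toFinite _)
  rw [Set.ssubset_def]
  constructor
  · rintro x ⟨h1, h2⟩
    exact ⟨h1.trans hc, h2.trans huv⟩
  · intro hsub
    exact hne (le_antisymm huv (hsub ⟨rfl, le_refl v⟩).2)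

lemma rank_le_iff (ch : X → Fin k) (hch : ∀ u v : X, ch u = ch v → u ≤ v ∨ v ≤ u)
    {u v : X} (hc : ch u = ch v) : u ≤ v ↔ chainRank ch u ≤ chainRank ch v := by
  constructor
  · exact rank_mono ch hc
  · intro hr
    rcases hch u v hc with h | h
    · exact h
    · rcases eq_or_ne v u with rfl | hne
      · exact le_refl _
      · exact absurd hr (not_le.mpr (rank_strict ch hc.symm h hne))

end PosetGraphAux

set_option maxHeartbeats 3200000 in
/-- The partition `(O, A₁,…,A_k, B₁,…,B_k)` of `posetGraph`, together with suitable
linear orders (the chain order within each `A_i` and `B_i`, the index order on `O`,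
and `a_u ≤ b_v` iff `u ⪯ v` between `A_i` and `B_j` for `i ≠ j`, completed to total
orders on the unions of pairs of parts), witnesses that `posetGraph` is an
inversion-free proper `(2k+1)`-mixed-thin graph (with all `E_{i,j} = E`). -/
theorem posetGraph_invFree_proper_mixed_thin {X : Type*} [Fintype X] [PartialOrder X]
    (k : ℕ) (ch : X → Fin k) (hch : ∀ u v : X, ch u = ch v → u ≤ v ∨ v ≤ u)
    (h : ℕ) (hh : h = Finset.univ.sup (fun i : Fin k => {v : X | ch v = i}.ncard)) :
    ∃ le : Fin (2 * k + 1) → Fin (2 * k + 1) → (X ⊕ X ⊕ Fin h) → (X ⊕ X ⊕ Fin h) → Prop,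
      MixedThinWitness (posetGraph ch h) (posetGraphPart ch h) le (fun _ _ => False) ∧
      -- the index order on `O`
      (∀ m m' : Fin h,
        le (posetGraphPart ch h (Sum.inr (Sum.inr m))) (posetGraphPart ch h (Sum.inr (Sum.inr m)))
          (Sum.inr (Sum.inr m)) (Sum.inr (Sum.inr m')) ↔ m ≤ m') ∧
      -- the chain order within each `A_i`
      (∀ u v : X, ch u = ch v →
        (le (posetGraphPart ch h (Sum.inl u)) (posetGraphPart ch h (Sum.inl u))
          (Sum.inl u) (Sum.inl v) ↔ u ≤ v)) ∧
      -- the chain order within each `B_i`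
      (∀ u v : X, ch u = ch v →
        (le (posetGraphPart ch h (Sum.inr (Sum.inl u))) (posetGraphPart ch h (Sum.inr (Sum.inl u)))
          (Sum.inr (Sum.inl u)) (Sum.inr (Sum.inl v)) ↔ u ≤ v)) ∧
      -- between `A_i` and `B_j` for `i ≠ j`: `a_u ≤ b_v` iff `u ⪯ v`
      (∀ u v : X, ch u ≠ ch v →
        (le (posetGraphPart ch h (Sum.inl u)) (posetGraphPart ch h (Sum.inr (Sum.inl v)))
          (Sum.inl u) (Sum.inr (Sum.inl v)) ↔ u ≤ v)) := by
  classical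
  refine ⟨fun _ _ => PosetGraphAux.theR ch h, ?_, fun m m' => Iff.rfl,
    fun u v hc => by simp [PosetGraphAux.theR, hc],
    fun u v hc => by simp [PosetGraphAux.theR, hc],
    fun u v hc => by simp [PosetGraphAux.theR, hc]⟩
  intro i j hij
  have hR : ∀ p q, mixedEdge (posetGraph ch h) (fun _ _ => False) i j p q ↔
      (posetGraph ch h).Adj p q := by
    intro p q; simp [mixedEdge]
  refine ⟨?_, ?_, ?_, ?_, fun _ _ _ _ => Iff.rfl, fun _ _ _ _ => Iff.rfl, ?_, ?_⟩
  -- reflexivity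
  · rintro (x | x | m) _ <;> simp [PosetGraphAux.theR]
  -- antisymmetry
  · rintro (x | x | m) (y | y | m') _ _ h1 h2 <;>
      simp only [PosetGraphAux.theR] at h1 h2
    · rcases h1 with ⟨hc1, hxy⟩ | hlt1 <;> rcases h2 with ⟨hc2, hyx⟩ | hlt2
      · exact congrArg _ (le_antisymm hxy hyx)
      · exact absurd hlt2 (by simp [hc1])
      · exact absurd hlt1 (by simp [hc2])
      · exact absurd hlt1 (asymm hlt2)
    · tauto
    · exfalso; omega
    · tauto
    · rcases h1 with ⟨hc1, hxy⟩ | hlt1 <;> rcases h2 with ⟨hc2, hyx⟩ | hlt2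
      · exact congrArg _ (congrArg _ (le_antisymm hxy hyx))
      · exact absurd hlt2 (by simp [hc1])
      · exact absurd hlt1 (by simp [hc2])
      · exact absurd hlt1 (asymm hlt2)
    · exfalso; omega
    · exfalso; omega
    · exfalso; omega
    · rw [le_antisymm h1 h2]
  -- transitivity
  · rintro (x | x | m) (y | y | m') (z | z | m'') hu hv hw h1 h2 <;>
      simp only [PosetGraphAux.theR] at h1 h2 ⊢ <;>
      simp only [posetGraphPart, Fin.ext_iff] at hu hv hw
    -- (a,a,a)
    · rcases h1 with ⟨hc1, h1⟩ | hlt1 <;> rcases h2 with ⟨hc2, h2⟩ | hlt2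
      · exact Or.inl ⟨hc1.trans hc2, h1.trans h2⟩
      · exact Or.inr (by rw [hc1]; exact hlt2)
      · exact Or.inr (by rw [← hc2]; exact hlt1)
      · exact Or.inr (hlt2.trans hlt1)
    -- (a,a,b)
    · have b1 := (ch x).isLt; have b2 := (ch y).isLt; have b3 := (ch z).isLt
      have hxy : ch x = ch y := Fin.ext (by omega)
      rcases h1 with ⟨hc1, h1⟩ | hlt1
      · exact ⟨by rw [hxy]; exact h2.1, h1.trans h2.2⟩
      · exact absurd hlt1 (by simp [hxy])
    -- (a,a,o)
    · have b1 := (ch x).isLt; have b2 := (ch y).isLt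
      have hxy : ch x = ch y := Fin.ext (by omega)
      rcases h1 with ⟨hc1, h1⟩ | hlt1
      · exact le_trans (PosetGraphAux.rank_mono ch hxy h1) h2
      · exact absurd hlt1 (by simp [hxy])
    -- (a,b,a)
    · have b1 := (ch x).isLt; have b2 := (ch y).isLt; have b3 := (ch z).isLt
      have hxz : ch x = ch z := Fin.ext (by omega)
      rcases h2 with h2 | h2
      · exact absurd (hxz.trans h2) h1.1
      · rcases hch x z hxz with hle | hle
        · exact Or.inl ⟨hxz, hle⟩
        · exact absurd (hle.trans h1.2) h2
    -- (a,b,b)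
    · have b1 := (ch x).isLt; have b2 := (ch y).isLt; have b3 := (ch z).isLt
      have hyz : ch y = ch z := Fin.ext (by omega)
      rcases h2 with ⟨hc2, h2⟩ | hlt2
      · exact ⟨fun e => h1.1 (e.trans hc2.symm), h1.2.trans h2⟩
      · exact absurd hlt2 (by simp [hyz])
    -- (a,b,o)
    · exfalso; have b1 := (ch x).isLt; have b2 := (ch y).isLt; omega
    -- (a,o,a)
    · have b1 := (ch x).isLt; have b3 := (ch z).isLt
      have hxz : ch x = ch z := Fin.ext (by omega)
      exact Or.inl ⟨hxz, (PosetGraphAux.rank_le_iff ch hch hxz).mpr (by omega)⟩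
    -- (a,o,b)
    · exfalso; have b1 := (ch x).isLt; have b3 := (ch z).isLt; omega
    -- (a,o,o)
    · exact h1.trans (Fin.le_def.mp h2)
    -- (b,a,a)
    · have b1 := (ch x).isLt; have b2 := (ch y).isLt; have b3 := (ch z).isLt
      have hyz : ch y = ch z := Fin.ext (by omega)
      rcases h2 with ⟨hc2, h2⟩ | hlt2
      · rcases h1 with h1 | h1
        · exact Or.inl (hyz.symm.trans h1)
        · exact Or.inr (fun hzx => h1 (h2.trans hzx))
      · exact absurd hlt2 (by simp [hyz])
    -- (b,a,b)
    · have b1 := (ch x).isLt; have b2 := (ch y).isLt; have b3 := (ch z).isLt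
      have hxz : ch x = ch z := Fin.ext (by omega)
      rcases h1 with h1 | h1
      · exact absurd (h1.trans hxz) h2.1
      · rcases hch x z hxz with hle | hle
        · exact Or.inl ⟨hxz, hle⟩
        · exact absurd (h2.2.trans hle) h1
    -- (b,a,o)
    · exfalso; have b1 := (ch x).isLt; have b2 := (ch y).isLt; omega
    -- (b,b,a)
    · have b1 := (ch x).isLt; have b2 := (ch y).isLt; have b3 := (ch z).isLt
      have hxy : ch x = ch y := Fin.ext (by omega)
      rcases h1 with ⟨hc1, h1⟩ | hlt1
      · rcases h2 with h2 | h2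
        · exact Or.inl (h2.trans hxy.symm)
        · exact Or.inr (fun hzx => h2 (hzx.trans h1))
      · exact absurd hlt1 (by simp [hxy])
    -- (b,b,b)
    · rcases h1 with ⟨hc1, h1⟩ | hlt1 <;> rcases h2 with ⟨hc2, h2⟩ | hlt2
      · exact Or.inl ⟨hc1.trans hc2, h1.trans h2⟩
      · exact Or.inr (by rw [hc1]; exact hlt2)
      · exact Or.inr (by rw [← hc2]; exact hlt1)
      · exact Or.inr (hlt2.trans hlt1)
    -- (b,b,o)
    · have b1 := (ch x).isLt; have b2 := (ch y).isLt
      have hxy : ch x = ch y := Fin.ext (by omega)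
      rcases h1 with ⟨hc1, h1⟩ | hlt1
      · exact le_trans (PosetGraphAux.rank_mono ch hxy h1) h2
      · exact absurd hlt1 (by simp [hxy])
    -- (b,o,a)
    · exfalso; have b1 := (ch x).isLt; have b3 := (ch z).isLt; omega
    -- (b,o,b)
    · have b1 := (ch x).isLt; have b3 := (ch z).isLt
      have hxz : ch x = ch z := Fin.ext (by omega)
      exact Or.inl ⟨hxz, (PosetGraphAux.rank_le_iff ch hch hxz).mpr (by omega)⟩
    -- (b,o,o)
    · exact h1.trans (Fin.le_def.mp h2)
    -- (o,a,a)
    · have b2 := (ch y).isLt; have b3 := (ch z).isLt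
      have hyz : ch y = ch z := Fin.ext (by omega)
      rcases h2 with ⟨hc2, h2⟩ | hlt2
      · exact lt_of_lt_of_le h1 (PosetGraphAux.rank_mono ch hyz h2)
      · exact absurd hlt2 (by simp [hyz])
    -- (o,a,b)
    · exfalso; have b2 := (ch y).isLt; have b3 := (ch z).isLt; omega
    -- (o,a,o)
    · exact Fin.le_def.mpr (by omega)
    -- (o,b,a)
    · exfalso; have b2 := (ch y).isLt; have b3 := (ch z).isLt; omega
    -- (o,b,b)
    · have b2 := (ch y).isLt; have b3 := (ch z).isLt
      have hyz : ch y = ch z := Fin.ext (by omega)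
      rcases h2 with ⟨hc2, h2⟩ | hlt2
      · exact lt_of_lt_of_le h1 (PosetGraphAux.rank_mono ch hyz h2)
      · exact absurd hlt2 (by simp [hyz])
    -- (o,b,o)
    · exact Fin.le_def.mpr (by omega)
    -- (o,o,a)
    · have := Fin.le_def.mp h1; omega
    -- (o,o,b)
    · have := Fin.le_def.mp h1; omega
    -- (o,o,o)
    · exact h1.trans h2
  -- totality
  · rintro (x | x | m) (y | y | m') _ _ <;> simp only [PosetGraphAux.theR]
    · rcases eq_or_ne (ch x) (ch y) with hc | hc
      · rcases hch x y hc with hle | hle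
        · exact Or.inl (Or.inl ⟨hc, hle⟩)
        · exact Or.inr (Or.inl ⟨hc.symm, hle⟩)
      · rcases hc.lt_or_gt with hlt | hlt
        · exact Or.inr (Or.inr hlt)
        · exact Or.inl (Or.inr hlt)
    · tauto
    · omega
    · tauto
    · rcases eq_or_ne (ch x) (ch y) with hc | hc
      · rcases hch x y hc with hle | hle
        · exact Or.inl (Or.inl ⟨hc, hle⟩)
        · exact Or.inr (Or.inl ⟨hc.symm, hle⟩)
      · rcases hc.lt_or_gt with hlt | hlt
        · exact Or.inr (Or.inr hlt)
        · exact Or.inl (Or.inr hlt)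
    · omega
    · omega
    · omega
    · exact le_total m m'
  -- condition (b)
  · rintro (x | x | m) (y | y | m') (z | z | m'') hmem h1 hne1 h2 hne2 hadj <;>
      simp only [PosetGraphAux.theR] at h1 h2 <;>
      simp only [hR] at hadj ⊢ <;>
      simp only [posetGraphPart, Fin.ext_iff] at hmem <;>
      simp [posetGraph, SimpleGraph.fromRel_adj] at hadj ⊢
    -- (a,a,b)
    · exact h2
    -- (a,a,o)
    · exfalso
      have b1 := (ch x).isLt; have b2 := (ch y).isLt
      have hxy : ch x = ch y := Fin.ext (by omega)
      rcases h1 with ⟨hc1, h1⟩ | hlt1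
      · have := PosetGraphAux.rank_mono ch hxy h1; omega
      · exact absurd hlt1 (by simp [hxy])
    -- (a,b,b)
    · exfalso; have b1 := (ch x).isLt; have b2 := (ch y).isLt; omega
    -- (a,b,o)
    · exfalso; have b1 := (ch x).isLt; have b2 := (ch y).isLt; omega
    -- (a,o,b)
    · exfalso; have b1 := (ch x).isLt; omega
    -- (a,o,o)
    · exfalso; have b1 := (ch x).isLt; omega
    -- (b,a,a)
    · exfalso; have b1 := (ch x).isLt; have b2 := (ch y).isLt; omega
    -- (b,a,o)
    · exfalso; have b1 := (ch x).isLt; have b2 := (ch y).isLt; omega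
    -- (b,b,a)
    · exfalso
      have b1 := (ch x).isLt; have b2 := (ch y).isLt; have b3 := (ch z).isLt
      have hxy : ch x = ch y := Fin.ext (by omega)
      have hx1 : x ≤ y := by
        rcases h1 with ⟨hc1, h1⟩ | hlt1
        · exact h1
        · exact absurd hlt1 (by simp [hxy])
      rcases h2 with h2 | h2
      · exact hadj.1 (h2.trans hxy.symm)
      · exact h2 (hadj.2.trans hx1)
    -- (b,b,o)
    · exfalso
      have b1 := (ch x).isLt; have b2 := (ch y).isLt
      have hxy : ch x = ch y := Fin.ext (by omega)
      rcases h1 with ⟨hc1, h1⟩ | hlt1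
      · have := PosetGraphAux.rank_mono ch hxy h1; omega
      · exact absurd hlt1 (by simp [hxy])
    -- (b,o,a)
    · exfalso; have b1 := (ch x).isLt; omega
    -- (b,o,o)
    · exfalso; have b1 := (ch x).isLt; omega
    -- (o,a,a)
    · exfalso; have b2 := (ch y).isLt; omega
    -- (o,a,b)
    · exfalso; have b2 := (ch y).isLt; omega
    -- (o,b,a)
    · exfalso; have b2 := (ch y).isLt; omega
    -- (o,b,b)
    · exfalso; have b2 := (ch y).isLt; omega
    -- (o,o,a)
    · omega
    -- (o,o,b)
    · omega
  -- condition (c)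
  · rintro (x | x | m) (y | y | m') (z | z | m'') hmem h1 hne1 h2 hne2 hadj <;>
      simp only [PosetGraphAux.theR] at h1 h2 <;>
      simp only [hR] at hadj ⊢ <;>
      simp only [posetGraphPart, Fin.ext_iff] at hmem <;>
      simp [posetGraph, SimpleGraph.fromRel_adj] at hadj ⊢
    -- (a,a,b)
    · exfalso; have b2 := (ch y).isLt; have b3 := (ch z).isLt; omega
    -- (a,a,o)
    · exfalso; have b2 := (ch y).isLt; omega
    -- (a,b,b)
    · exact h1
    -- (a,b,o)
    · exfalso; have b2 := (ch y).isLt; omega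
    -- (a,o,b)
    · exfalso; have b3 := (ch z).isLt; omega
    -- (a,o,o)
    · exfalso; have := Fin.le_def.mp h2; omega
    -- (b,a,a)
    · exfalso
      have b1 := (ch x).isLt; have b2 := (ch y).isLt; have b3 := (ch z).isLt
      have hyz : ch y = ch z := Fin.ext (by omega)
      have hy2 : y ≤ z := by
        rcases h2 with ⟨hc2, h2⟩ | hlt2
        · exact h2
        · exact absurd hlt2 (by simp [hyz])
      rcases h1 with h1 | h1
      · exact hadj.1 (hyz.symm.trans h1)
      · exact h1 (hy2.trans hadj.2)
    -- (b,a,o)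
    · exfalso; have b2 := (ch y).isLt; omega
    -- (b,b,a)
    · exfalso; have b2 := (ch y).isLt; have b3 := (ch z).isLt; omega
    -- (b,b,o)
    · exfalso; have b2 := (ch y).isLt; omega
    -- (b,o,a)
    · exfalso; have b3 := (ch z).isLt; omega
    -- (b,o,o)
    · exfalso; have := Fin.le_def.mp h2; omega
    -- (o,a,a)
    · omega
    -- (o,a,b)
    · exfalso; have b2 := (ch y).isLt; have b3 := (ch z).isLt; omega
    -- (o,b,a)
    · exfalso; have b2 := (ch y).isLt; have b3 := (ch z).isLt; omega
    -- (o,b,b)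
    · omega
    -- (o,o,a)
    · exfalso; have b3 := (ch z).isLt; omega
    -- (o,o,b)
    · exfalso; have b3 := (ch z).isLt; omega
end

section
/- In the lower-bound graph G of Proposition 7 (vertices (i,j) for 1 ≤ i ≤ 2k+1, 0 ≤ j ≤ h, h ≥ 4k−4, as constructed there), the following order on C_i ∪ C_{i'} with i' = i + a + 1 (mod 2k+1), 0 ≤ a < k, satisfies conditions (b) and (c) of Definition 1 with E_{i,i'} = E(G): the order lists (i',0),…,(i', k+a−1), then (i,0),…,(i,a), then (i', k+a),…,(i', 2k+a−1), then (i, a+1),…,(i, k+a), and so on, alternating blocks, ending with the top of C_i. -/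
/-- The cross edges of the lower-bound graph: `p` in chain `i` (0-based) is joined to
`q` in chain `i + a + 1 (mod 2k+1)` when, for some `0 ≤ a < k` and `0 ≤ b < ⌊(h−a)/k⌋`,
`(b−1)k + a < j ≤ bk + a` and `(b+1)k + a ≤ j' ≤ h`, where `j, j'` are the levels of
`p, q`. -/
def lbCross (k h : ℕ) (p q : Fin (2 * k + 1) × Fin (h + 1)) : Prop :=
  ∃ a b : ℕ, a < k ∧ b < (h - a) / k ∧
    (q.1 : ℕ) = ((p.1 : ℕ) + a + 1) % (2 * k + 1) ∧
    ((b : ℤ) - 1) * (k : ℤ) + (a : ℤ) < ((p.2 : ℕ) : ℤ) ∧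
    ((p.2 : ℕ) : ℤ) ≤ (b : ℤ) * (k : ℤ) + (a : ℤ) ∧
    ((b : ℤ) + 1) * (k : ℤ) + (a : ℤ) ≤ ((q.2 : ℕ) : ℤ)

/-- The lower-bound graph of Proposition 7: `2k+1` chains `C_i`, each inducing a clique,
together with the cross edges `lbCross`. -/
def lbGraph (k h : ℕ) : SimpleGraph (Fin (2 * k + 1) × Fin (h + 1)) :=
  SimpleGraph.fromRel (fun p q => p.1 = q.1 ∨ lbCross k h p q)


/-- The position of a vertex of `C_i ∪ C_{i'}` in the linear order of Proposition 7:
the order lists `(i',0),…,(i',k+a−1)`, then `(i,0),…,(i,a)`, then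
`(i',k+a),…,(i',2k+a−1)`, then `(i,a+1),…,(i,k+a)`, and so on, alternating blocks,
ending with the top of `C_i`. -/
def lbPos (k h a : ℕ) (i : Fin (2 * k + 1)) (p : Fin (2 * k + 1) × Fin (h + 1)) : ℕ :=
  if p.1 = i then
    -- block `t` of `C_i` is `(i, a+(t−1)k+1), …, (i, a+tk)` (block `0` is `(i,0),…,(i,a)`)
    (p.2 : ℕ) + ((if (p.2 : ℕ) ≤ a then 0 else ((p.2 : ℕ) - a - 1) / k + 1) + 1) * k + a
  else
    -- block `t` of `C_{i'}` is `(i', tk+a), …, (i', (t+1)k+a−1)` (block `0` starts at `(i',0)`)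
    (p.2 : ℕ) + (if (p.2 : ℕ) < k + a then 0 else a + 1 + (((p.2 : ℕ) - a) / k - 1) * k)

private lemma no_rev {k : ℕ} (i i' : Fin (2*k+1)) {a a' : ℕ} (ha : a < k) (ha' : a' < k)
    (hi' : (i':ℕ) = ((i:ℕ) + a + 1) % (2*k+1))
    (h : (i:ℕ) = ((i':ℕ) + a' + 1) % (2*k+1)) : False := by
  rw [hi'] at h
  rw [add_assoc, Nat.mod_add_mod] at h
  have h2 : (i:ℕ) % (2*k+1) = ((i:ℕ) + (a+a'+2)) % (2*k+1) := by
    rw [Nat.mod_eq_of_lt i.isLt]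
    exact h.trans (by congr 1; ring)
  have h3 := (Nat.modEq_iff_dvd' (Nat.le_add_right _ _)).mp h2
  rw [Nat.add_sub_cancel_left] at h3
  have := Nat.le_of_dvd (by omega) h3
  omega

private lemma i_ne {k : ℕ} (i i' : Fin (2*k+1)) {a : ℕ} (ha : a < k)
    (hi' : (i':ℕ) = ((i:ℕ) + a + 1) % (2*k+1)) : i' ≠ i := by
  intro he
  rw [he] at hi'
  have h2 : (i:ℕ) % (2*k+1) = ((i:ℕ) + (a+1)) % (2*k+1) := by
    rw [Nat.mod_eq_of_lt i.isLt, ← add_assoc]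
    exact hi'
  have h3 := (Nat.modEq_iff_dvd' (Nat.le_add_right _ _)).mp h2
  rw [Nat.add_sub_cancel_left] at h3
  have := Nat.le_of_dvd (by omega) h3
  omega

private lemma a_unique {k : ℕ} (i i' : Fin (2*k+1)) {a a' : ℕ} (ha : a < k) (ha' : a' < k)
    (hi' : (i':ℕ) = ((i:ℕ) + a + 1) % (2*k+1))
    (h : (i':ℕ) = ((i:ℕ) + a' + 1) % (2*k+1)) : a' = a := by
  have h3 : (a' + ((i:ℕ)+1)) % (2*k+1) = (a + ((i:ℕ)+1)) % (2*k+1) := by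
    rw [show a' + ((i:ℕ)+1) = (i:ℕ) + a' + 1 by ring,
        show a + ((i:ℕ)+1) = (i:ℕ) + a + 1 by ring, ← h, hi']
  have h4 : a' ≡ a [MOD 2*k+1] := Nat.ModEq.add_right_cancel' _ h3
  have h5 : a' % (2*k+1) = a % (2*k+1) := h4
  rw [Nat.mod_eq_of_lt (by omega), Nat.mod_eq_of_lt (by omega)] at h5
  exact h5


private lemma sfacts {k a j' : ℕ} (hk0 : 0 < k) (hka : k + a ≤ j') :
    (j'-a)/k * k + a ≤ j' ∧ j' < (j'-a)/k * k + k + a ∧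
    ((j'-a)/k - 1) * k + k = (j'-a)/k * k := by
  have haj' : a ≤ j' := by omega
  have hsd := Nat.div_add_mod (j' - a) k
  have hsr := Nat.mod_lt (j' - a) hk0
  set s := (j' - a) / k with hss
  have h5 : k * s ≤ j' - a := Nat.le.intro hsd
  have hs1 : s * k + a ≤ j' := by
    have h6 := Nat.add_le_add_right h5 a
    rw [Nat.sub_add_cancel haj'] at h6
    linarith
  have h6 : j' - a < k * s + k := by
    rw [← hsd]
    exact Nat.add_lt_add_left hsr _
  have hs2 : j' < s * k + k + a := by
    have h7 := Nat.add_lt_add_right h6 a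
    rw [Nat.sub_add_cancel haj'] at h7
    linarith
  have hs0 : 1 ≤ s := by
    rcases Nat.eq_zero_or_pos s with h0 | h0
    · rw [h0] at hs2; simp at hs2; omega
    · exact h0
  have h7 : (s - 1) * k + k = s * k := by
    have : s - 1 + 1 = s := by omega
    calc (s-1)*k + k = (s-1+1)*k := by ring
    _ = s * k := by rw [this]
  exact ⟨hs1, hs2, h7⟩

private lemma cross_iff {k h a : ℕ} (hk : 1 ≤ k) (hah : a ≤ h) (ha : a < k)
    (j j' : ℕ) (hj' : j' ≤ h) :
    (∃ b : ℕ, b < (h - a) / k ∧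
      ((b : ℤ) - 1) * (k : ℤ) + (a : ℤ) < (j : ℤ) ∧
      (j : ℤ) ≤ (b : ℤ) * (k : ℤ) + (a : ℤ) ∧
      ((b : ℤ) + 1) * (k : ℤ) + (a : ℤ) ≤ (j' : ℤ)) ↔
    j + ((if j ≤ a then 0 else (j - a - 1) / k + 1) + 1) * k + a <
      j' + (if j' < k + a then 0 else a + 1 + ((j' - a) / k - 1) * k) := by
  have hk0 : 0 < k := hk
  set t := (if j ≤ a then 0 else (j - a - 1) / k + 1) with hts
  have hAB : j ≤ t * k + a ∧ t * k + a < j + k := by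
    rw [hts]; split_ifs with hja
    · constructor <;> simp <;> omega
    · obtain ⟨X, hX⟩ : ∃ X, j - a - 1 = X := ⟨_, rfl⟩
      have hm : X + a + 1 = j := by omega
      rw [hX]
      have hd := Nat.div_add_mod X k
      have hr := Nat.mod_lt X hk0
      obtain ⟨d, hdq⟩ : ∃ d, X / k = d := ⟨_, rfl⟩
      obtain ⟨r, hrq⟩ : ∃ r, X % k = r := ⟨_, rfl⟩
      rw [hdq]
      rw [hdq, hrq] at hd
      rw [hrq] at hr
      constructor <;> linarith
  obtain ⟨hA, hB⟩ := hAB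
  have hAz : (j:ℤ) ≤ (t:ℤ) * k + a := by exact_mod_cast hA
  have hBz : (t:ℤ) * k + a < (j:ℤ) + k := by exact_mod_cast hB
  constructor
  · rintro ⟨b, hb, h1, h2, h3⟩
    have hbt : b = t := by
      by_contra hne
      rcases Nat.lt_or_ge b t with hlt | hge
      · have hm : ((b:ℤ)+1) * k ≤ (t:ℤ) * k := by
          have : (b+1) * k ≤ t * k := Nat.mul_le_mul (by omega) le_rfl
          exact_mod_cast this
        linarith
      · have hm : ((t:ℤ)+1) * k ≤ (b:ℤ) * k := by
          have : (t+1) * k ≤ b * k := Nat.mul_le_mul (by omega) le_rfl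
          exact_mod_cast this
        linarith
    subst hbt
    have htk : (0:ℤ) ≤ (t:ℤ) * k := by positivity
    have hj'k : ¬ (j' < k + a) := by
      intro hc
      have : (j':ℤ) < (k:ℤ) + a := by exact_mod_cast hc
      linarith
    rw [if_neg hj'k]
    have hka : k + a ≤ j' := Nat.le_of_not_lt hj'k
    obtain ⟨hs1, hs2, h7⟩ := sfacts hk0 hka
    have hst : t + 1 ≤ (j' - a) / k := by
      refine (Nat.le_div_iff_mul_le hk0).mpr ?_
      refine Nat.le_sub_of_add_le ?_
      exact_mod_cast h3
    have hmul : (t+1) * k ≤ (j'-a)/k * k := Nat.mul_le_mul hst le_rfl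
    linarith
  · intro hpos
    by_cases hj'k : j' < k + a
    · rw [if_pos hj'k] at hpos
      exfalso
      have hk' : k ≤ (t+1)*k := Nat.le_mul_of_pos_left k (Nat.succ_pos t)
      linarith
    · rw [if_neg hj'k] at hpos
      have hka : k + a ≤ j' := Nat.le_of_not_lt hj'k
      obtain ⟨hs1, hs2, h7⟩ := sfacts hk0 hka
      have hst : t + 1 ≤ (j'-a)/k := by
        by_contra hc
        have hsc : (j'-a)/k ≤ t := by omega
        have hmul : (j'-a)/k * k ≤ t * k := Nat.mul_le_mul hsc le_rfl
        linarith
      have hmul : (t+1) * k ≤ (j'-a)/k * k := Nat.mul_le_mul hst le_rfl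
      have h3n : (t+1)*k + a ≤ j' := by linarith
      refine ⟨t, ?_, ?_, ?_, ?_⟩
      · have h8 : (t+1)*k + a ≤ h := le_trans h3n hj'
        have h9 : (t+1)*k ≤ h - a := Nat.le_sub_of_add_le h8
        have h10 := (Nat.le_div_iff_mul_le hk0).mpr h9
        exact Nat.lt_of_lt_of_le (Nat.lt_succ_self t) h10
      · linarith
      · exact hAz
      · exact_mod_cast h3n

private lemma adj_iff {k h : ℕ} (hk : 1 ≤ k) (hh : 4*k-4 ≤ h)
    {i i' : Fin (2*k+1)} {a : ℕ} (ha : a < k)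
    (hi' : (i':ℕ) = ((i:ℕ) + a + 1) % (2*k+1))
    (u w : Fin (2*k+1) × Fin (h+1)) (hu : u.1 = i) (hw : w.1 = i') :
    (lbGraph k h).Adj u w ↔ lbPos k h a i u < lbPos k h a i w := by
  have hne : i' ≠ i := i_ne i i' ha hi'
  have huw : u.1 ≠ w.1 := by rw [hu, hw]; exact hne.symm
  have hah : a ≤ h := by omega
  have hj'le : ((w.2 : ℕ)) ≤ h := Nat.lt_succ_iff.mp w.2.isLt
  rw [lbGraph, SimpleGraph.fromRel_adj]
  unfold lbPos
  rw [if_pos (show u.1 = i from hu), if_neg (show ¬(w.1 = i) from fun hc => hne (hw.symm.trans hc))]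
  constructor
  · rintro ⟨-, (h1 | h1) | (h2 | h2)⟩
    · exact absurd h1 huw
    · obtain ⟨a', b, ha', hb, hq, hint1, hint2, hint3⟩ := h1
      rw [hu, hw] at hq
      obtain rfl : a' = a := a_unique i i' ha ha' hi' hq
      exact (cross_iff hk hah ha (u.2 : ℕ) (w.2 : ℕ) hj'le).mp ⟨b, hb, hint1, hint2, hint3⟩
    · exact absurd h2.symm huw
    · obtain ⟨a', b, ha', hb, hq, -⟩ := h2
      rw [hu, hw] at hq
      exact absurd hq (fun hq' => no_rev i i' ha ha' hi' hq')
  · intro hpos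
    refine ⟨fun he => huw (by rw [he]), Or.inl (Or.inr ?_)⟩
    obtain ⟨b, hb, h1, h2, h3⟩ := (cross_iff hk hah ha (u.2 : ℕ) (w.2 : ℕ) hj'le).mpr hpos
    exact ⟨a, b, ha, hb, by rw [hu, hw]; exact hi', h1, h2, h3⟩


/-- The alternating-blocks order on `C_i ∪ C_{i'}`, `i' = i + a + 1 (mod 2k+1)`,
satisfies conditions (b) and (c) of Definition 1 with `E_{i,i'} = E(G)` in the
lower-bound graph of Proposition 7. -/
theorem lbGraph_order_conditions (k h : ℕ) (hk : 1 ≤ k) (hh : 4 * k - 4 ≤ h)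
    (i : Fin (2 * k + 1)) (a : ℕ) (ha : a < k)
    (i' : Fin (2 * k + 1)) (hi' : (i' : ℕ) = ((i : ℕ) + a + 1) % (2 * k + 1)) :
    -- condition (b)
    (∀ u v w : Fin (2 * k + 1) × Fin (h + 1),
      (u.1 = i ∨ u.1 = i') → (v.1 = i ∨ v.1 = i') → (w.1 = i ∨ w.1 = i') →
      u.1 = v.1 → v.1 ≠ w.1 →
      lbPos k h a i u < lbPos k h a i v → lbPos k h a i v < lbPos k h a i w →
      (lbGraph k h).Adj u w → (lbGraph k h).Adj v w) ∧
    -- condition (c)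
    (∀ u v w : Fin (2 * k + 1) × Fin (h + 1),
      (u.1 = i ∨ u.1 = i') → (v.1 = i ∨ v.1 = i') → (w.1 = i ∨ w.1 = i') →
      v.1 = w.1 → u.1 ≠ v.1 →
      lbPos k h a i u < lbPos k h a i v → lbPos k h a i v < lbPos k h a i w →
      (lbGraph k h).Adj u w → (lbGraph k h).Adj u v) := by
  have hne : i' ≠ i := i_ne i i' ha hi'
  constructor
  · rintro u v w hu hv hw h1 h2 hp1 hp2 hadj
    rcases hv with hv | hv
    · -- v in C_i, so w in C_{i'}
      rcases hw with hw | hw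
      · exact absurd (hv.trans hw.symm) h2
      · exact (adj_iff hk hh ha hi' v w hv hw).mpr hp2
    · -- v in C_{i'}, so w in C_i, u in C_{i'}
      rcases hw with hw | hw
      · have hu' : u.1 = i' := h1.trans hv
        have := (adj_iff hk hh ha hi' w u hw hu').mp hadj.symm
        omega
      · exact absurd (hv.trans hw.symm) h2
  · rintro u v w hu hv hw h1 h2 hp1 hp2 hadj
    rcases hu with hu | hu
    · rcases hv with hv | hv
      · exact absurd (hu.trans hv.symm) h2
      · exact (adj_iff hk hh ha hi' u v hu hv).mpr hp1
    · rcases hv with hv | hv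
      · have hw' : w.1 = i := h1.symm.trans hv
        have := (adj_iff hk hh ha hi' w u hw' hu).mp hadj.symm
        omega
      · exact absurd (hu.trans hv.symm) h2
end
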